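/- Let p ≥ 2 and n = 3p−1, and for i ∈ ℤ let ī denote the unique element of [n] with ī ≡ i (mod n). Let Σ = ⟨{ {ī, (i+1)¯, (i+2)¯} : i=1,…,n }⟩, and for i=1,…,n and j=1,…,p−2 let Δ(i,j) = ⟨{ī, (i+1)¯, (i+2+3j)¯}, {(i+1+3j)¯, (i+2+3j)¯, (i+1)¯}⟩, and let L = {Δ(i,j) : i=1,…,n, j=1,…,p−2}. Then for any subset M ⊆ L, the complex Σ ∪ (⋃_{Δ(i,j)∈M} Δ(i,j)) is Buchsbaum and link-acyclic. -/

import Mathlib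

open Finset

noncomputable section

/-- `Δ` is a simplicial complex on `[n] = {1,…,n}`: a collection of subsets of `[n]`,
closed under taking subsets, containing every singleton `{i}` for `i ∈ [n]`. -/
def IsComplexOn (n : ℕ) (Δ : Finset (Finset ℕ)) : Prop :=
  (∀ F ∈ Δ, ∀ G ⊆ F, G ∈ Δ) ∧
  (∀ F ∈ Δ, ∀ i ∈ F, i ∈ Finset.Icc 1 n) ∧
  (∀ i ∈ Finset.Icc 1 n, ({i} : Finset ℕ) ∈ Δ)

/-- a simplicial complex whose vertex set is contained in `[n]`:
a downward closed collection of subsets of `[n]`. -/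
def IsComplexIn (n : ℕ) (Δ : Finset (Finset ℕ)) : Prop :=
  (∀ F ∈ Δ, ∀ G ⊆ F, G ∈ Δ) ∧ (∀ F ∈ Δ, ∀ i ∈ F, i ∈ Finset.Icc 1 n)

/-- the faces of `Δ` with `m` vertices -/
def facesOf (Δ : Finset (Finset ℕ)) (m : ℕ) : Finset (Finset ℕ) :=
  Δ.filter fun F => F.card = m

/-- `fVec Δ j = f_{j-1}(Δ)`, the number of faces of `Δ` with `j` vertices;
by convention `f_{-1}(Δ) = 1`. -/
def fVec (Δ : Finset (Finset ℕ)) (j : ℕ) : ℤ :=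
  if j = 0 then 1 else ((facesOf Δ j).card : ℤ)

/-- the `h`-vector of a `(d-1)`-dimensional complex, defined by
`∑ f_{i-1} (x-1)^{d-i} = ∑ h_i x^{d-i}`, i.e.
`h_i = ∑_{j=0}^{i} (-1)^{i-j} C(d-j, i-j) f_{j-1}`. -/
def hVec (d : ℕ) (Δ : Finset (Finset ℕ)) (i : ℕ) : ℤ :=
  ∑ j ∈ Finset.range (i + 1),
    (-1 : ℤ) ^ (i - j) * ((d - j).choose (i - j) : ℤ) * fVec Δ j

/-- the dimension `max {k : f_k(Δ) ≠ 0}` of `Δ`, as an integer -/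
def dimZ (Δ : Finset (Finset ℕ)) : ℤ := ((Δ.sup Finset.card : ℕ) : ℤ) - 1

/-- the link `lk_Δ(F) = {G : G ∩ F = ∅, G ∪ F ∈ Δ}` -/
def link (Δ : Finset (Finset ℕ)) (F : Finset ℕ) : Finset (Finset ℕ) :=
  Δ.filter fun G => Disjoint G F ∧ G ∪ F ∈ Δ

variable (K : Type) [Field K]

/-- the simplicial boundary operator on formal `K`-linear combinations of
finite subsets of `ℕ` (vertices ordered by the order on `ℕ`):
`∂ F = ∑_{v ∈ F} (-1)^{#{u ∈ F : u < v}} (F \ {v})`. -/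
def bdry : (Finset ℕ →₀ K) →ₗ[K] (Finset ℕ →₀ K) :=
  Finsupp.lsum K fun F => LinearMap.toSpanSingleton K (Finset ℕ →₀ K)
    (∑ v ∈ F, ((-1 : K) ^ ((F.filter fun u => u < v).card)) • Finsupp.single (F.erase v) (1 : K))

/-- the space of simplicial `K`-chains of `Δ` spanned by the faces with `m` vertices
(for `m = 0` this is the span of the empty face, giving *reduced* homology) -/
def chains (Δ : Finset (Finset ℕ)) (m : ℕ) : Submodule K (Finset ℕ →₀ K) :=
  Submodule.span K ((fun F => Finsupp.single F (1 : K)) '' (facesOf Δ m : Set (Finset ℕ)))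

/-- the dimension of the reduced homology of `Δ` at faces of cardinality `m`:
`dim (ker ∂ ∩ C_m) - dim (∂ C_{m+1})` -/
def homDim (Δ : Finset (Finset ℕ)) (m : ℕ) : ℕ :=
  Module.finrank K ↥(chains K Δ m ⊓ LinearMap.ker (bdry K))
    - Module.finrank K ↥((chains K Δ (m + 1)).map (bdry K))

/-- the reduced Betti number `β_i(Δ; K) = dim_K H̃_i(Δ; K)` for `i : ℤ` -/
def betti (Δ : Finset (Finset ℕ)) (i : ℤ) : ℕ :=
  if 0 ≤ i + 1 then homDim K Δ (i + 1).toNat else 0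

/-- all facets (maximal faces) of `Δ` have the same cardinality -/
def IsPure (Δ : Finset (Finset ℕ)) : Prop :=
  ∀ F ∈ Δ, (∀ G ∈ Δ, F ⊆ G → F = G) → F.card = Δ.sup Finset.card

/-- `Δ` is Cohen–Macaulay (over `K`): for every face `F ∈ Δ` (including `∅`),
`β_i(lk_Δ(F)) = 0` for all `i ≠ dim Δ - |F|`. -/
def IsCohenMacaulay (Δ : Finset (Finset ℕ)) : Prop :=
  ∀ F ∈ Δ, ∀ i : ℤ, i ≠ dimZ Δ - F.card → betti K (link Δ F) i = 0

/-- `Δ` is Buchsbaum (over `K`): `Δ` is pure and the link of every vertex is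
Cohen–Macaulay. -/
def IsBuchsbaum (Δ : Finset (Finset ℕ)) : Prop :=
  IsPure Δ ∧ ∀ v : ℕ, ({v} : Finset ℕ) ∈ Δ → IsCohenMacaulay K (link Δ {v})

/-- `Δ` is connected: any two vertices are joined by a path of edges of `Δ` -/
def IsConnectedComplex (Δ : Finset (Finset ℕ)) : Prop :=
  ∀ u v : ℕ, ({u} : Finset ℕ) ∈ Δ → ({v} : Finset ℕ) ∈ Δ →
    Relation.ReflTransGen (fun a b : ℕ => a ≠ b ∧ ({a, b} : Finset ℕ) ∈ Δ) u v

/-- `Δ` is link-acyclic: `β_i(lk_Δ(v)) = 0` for every vertex `v` of `Δ` and every `i` -/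
def IsLinkAcyclic (Δ : Finset (Finset ℕ)) : Prop :=
  ∀ v : ℕ, ({v} : Finset ℕ) ∈ Δ → ∀ i : ℤ, betti K (link Δ {v}) i = 0

/-- `Δ` is `2`-dimensional with `h`-vector `(a, b, c, e)` -/
def hVector3 (Δ : Finset (Finset ℕ)) (a b c e : ℤ) : Prop :=
  hVec 3 Δ 0 = a ∧ hVec 3 Δ 1 = b ∧ hVec 3 Δ 2 = c ∧ hVec 3 Δ 3 = e

/-- `macaulay2 a = a^⟨2⟩`: if `a = C(b,2) + r` is the (greedy) `2`-nd Macaulay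
representation (`b` maximal with `C(b,2) ≤ a`, `0 ≤ r < b`, `r = C(r,1)`), then
`a^⟨2⟩ = C(b+1,3) + C(r+1,2)`, and `0^⟨2⟩ = 0`. -/
def macaulay2 (a : ℕ) : ℕ :=
  if a = 0 then 0
  else
    (Nat.findGreatest (fun t => t.choose 2 ≤ a) (a + 2) + 1).choose 3
      + (a - (Nat.findGreatest (fun t => t.choose 2 ≤ a) (a + 2)).choose 2 + 1).choose 2

/-- `modRep n i = ī`, the unique element of `[n] = {1,…,n}` congruent to `i` mod `n` -/
def modRep (n : ℕ) (i : ℤ) : ℕ := ((i - 1) % (n : ℤ)).toNat + 1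


/-- `Σ` for `n = 3p-1`: generated by `{ī, (i+1)¯, (i+2)¯}`, `i = 1,…,n` -/
def SigmaA (p : ℕ) : Finset (Finset ℕ) :=
  (Finset.Icc 1 (3 * p - 1)).biUnion fun i =>
    ({modRep (3 * p - 1) (i : ℤ), modRep (3 * p - 1) ((i : ℤ) + 1),
      modRep (3 * p - 1) ((i : ℤ) + 2)} : Finset ℕ).powerset

/-- `Δ(i,j)` for `n = 3p-1`: generated by `{ī, (i+1)¯, (i+2+3j)¯}` and
`{(i+1+3j)¯, (i+2+3j)¯, (i+1)¯}` -/
def DeltaA (p i j : ℕ) : Finset (Finset ℕ) :=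
  ({modRep (3 * p - 1) (i : ℤ), modRep (3 * p - 1) ((i : ℤ) + 1),
    modRep (3 * p - 1) ((i : ℤ) + 2 + 3 * (j : ℤ))} : Finset ℕ).powerset ∪
  ({modRep (3 * p - 1) ((i : ℤ) + 1 + 3 * (j : ℤ)),
    modRep (3 * p - 1) ((i : ℤ) + 2 + 3 * (j : ℤ)),
    modRep (3 * p - 1) ((i : ℤ) + 1)} : Finset ℕ).powerset

end
section Hom
open Finsupp
variable {K : Type} [Field K]

lemma bdry_single (F : Finset ℕ) :
    bdry K (Finsupp.single F (1:K)) =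
      ∑ v ∈ F, ((-1 : K) ^ ((F.filter fun u => u < v).card)) • Finsupp.single (F.erase v) (1 : K) := by
  simp [bdry, Finsupp.lsum_single, LinearMap.toSpanSingleton_apply]

lemma bdry_single_empty : bdry K (Finsupp.single (∅ : Finset ℕ) (1:K)) = 0 := by
  simp [bdry_single]

lemma bdry_single_vertex (u : ℕ) :
    bdry K (Finsupp.single ({u} : Finset ℕ) (1:K)) = Finsupp.single (∅ : Finset ℕ) (1:K) := by
  rw [bdry_single]
  rw [Finset.sum_singleton]
  have : (({u} : Finset ℕ).filter fun x => x < u) = ∅ := by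
    simp [Finset.filter_singleton]
  simp [this]

lemma bdry_single_pair {a b : ℕ} (h : a < b) :
    bdry K (Finsupp.single ({a, b} : Finset ℕ) (1:K)) =
      Finsupp.single ({b} : Finset ℕ) (1:K) - Finsupp.single ({a} : Finset ℕ) (1:K) := by
  have hne : a ≠ b := h.ne
  have hmem : a ∉ ({b} : Finset ℕ) := by simp [hne]
  rw [bdry_single, Finset.sum_insert hmem, Finset.sum_singleton]
  have h1 : (({a, b} : Finset ℕ).filter fun u => u < a) = ∅ := by
    apply Finset.filter_eq_empty_iff.2
    intro x hx
    rcases Finset.mem_insert.1 hx with rfl | hx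
    · omega
    · rcases Finset.mem_singleton.1 hx with rfl; omega
  have h2 : (({a, b} : Finset ℕ).filter fun u => u < b) = {a} := by
    ext x
    simp only [Finset.mem_filter, Finset.mem_insert, Finset.mem_singleton]
    constructor
    · rintro ⟨rfl | rfl, hx⟩ <;> omega
    · rintro rfl; exact ⟨Or.inl rfl, h⟩
  have h3 : ({a, b} : Finset ℕ).erase a = {b} := by
    rw [Finset.erase_insert hmem]
  have h4 : ({a, b} : Finset ℕ).erase b = {a} := by
    ext x
    simp only [Finset.mem_erase, Finset.mem_insert, Finset.mem_singleton]
    constructor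
    · rintro ⟨hx, rfl | rfl⟩ <;> simp_all
    · rintro rfl; exact ⟨hne, Or.inl rfl⟩
  rw [h1, h2, h3, h4]
  simp
  ring_nf
  abel

lemma single_mem_chains {Γ : Finset (Finset ℕ)} {F : Finset ℕ} {m : ℕ}
    (hF : F ∈ Γ) (hc : F.card = m) : Finsupp.single F (1:K) ∈ chains K Γ m :=
  Submodule.subset_span ⟨F, by simp [facesOf, hF, hc], rfl⟩

lemma chains_eq_bot {Γ : Finset (Finset ℕ)} {m : ℕ} (h : ∀ F ∈ Γ, F.card ≠ m) :
    chains K Γ m = ⊥ := by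
  have : facesOf Γ m = ∅ := by
    apply Finset.filter_eq_empty_iff.2 h
  rw [chains, this]
  simp

instance chains_fd (Γ : Finset (Finset ℕ)) (m : ℕ) : FiniteDimensional K (chains K Γ m) :=
  FiniteDimensional.span_of_finite K ((facesOf Γ m).finite_toSet.image _)

lemma homDim_eq_zero_of_le {Γ : Finset (Finset ℕ)} {m : ℕ}
    (h : chains K Γ m ⊓ LinearMap.ker (bdry K) ≤ (chains K Γ (m + 1)).map (bdry K)) :
    homDim K Γ m = 0 := by
  haveI : FiniteDimensional K ((chains K Γ (m + 1)).map (bdry K)) := by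
    exact Module.Finite.map _ _
  exact Nat.sub_eq_zero_of_le (Submodule.finrank_mono h)

lemma betti_eq_zero_of_le {Γ : Finset (Finset ℕ)} {i : ℤ} (hi : 0 ≤ i + 1)
    (h : chains K Γ (i+1).toNat ⊓ LinearMap.ker (bdry K) ≤
      (chains K Γ ((i+1).toNat + 1)).map (bdry K)) : betti K Γ i = 0 := by
  rw [betti, if_pos hi]
  exact homDim_eq_zero_of_le h

lemma betti_eq_zero_of_bot {Γ : Finset (Finset ℕ)} {i : ℤ}
    (h : ∀ F ∈ Γ, (F.card : ℤ) ≠ i + 1) : betti K Γ i = 0 := by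
  by_cases hi : 0 ≤ i + 1
  · apply betti_eq_zero_of_le hi
    rw [chains_eq_bot (K := K) (m := (i+1).toNat) (fun F hF => by
      intro hc; exact h F hF (by omega))]
    simp
  · rw [betti, if_neg hi]
-- link basics
lemma link_empty (Γ : Finset (Finset ℕ)) : link Γ ∅ = Γ := by
  rw [link]
  apply Finset.filter_true_of_mem
  intro F hF
  simp [hF]

lemma mem_link {Γ : Finset (Finset ℕ)} {F G : Finset ℕ} :
    G ∈ link Γ F ↔ G ∈ Γ ∧ Disjoint G F ∧ G ∪ F ∈ Γ := by
  simp [link]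

-- 0-dimensional complexes: betti vanishes away from 0
lemma betti_zero_dim {K : Type} [Field K] {Γ : Finset (Finset ℕ)}
    (h0 : (∅ : Finset ℕ) ∈ Γ) (w : ℕ) (hw : ({w} : Finset ℕ) ∈ Γ)
    (hcard : ∀ F ∈ Γ, F.card ≤ 1) :
    ∀ i : ℤ, i ≠ 0 → betti K Γ i = 0 := by
  intro i hi
  by_cases hineg : 0 ≤ i + 1
  · rcases Nat.eq_zero_or_pos (i+1).toNat with hm | hm
    · -- i = -1 : chains 0 ≤ image of chains 1
      apply betti_eq_zero_of_le hineg
      rw [hm]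
      refine le_trans inf_le_left ?_
      rw [chains]
      apply Submodule.span_le.2
      rintro x ⟨F, hF, rfl⟩
      have hF' : F ∈ Γ ∧ F.card = 0 := by simpa [facesOf] using hF
      have : F = ∅ := Finset.card_eq_zero.1 hF'.2
      subst this
      refine ⟨Finsupp.single {w} 1, single_mem_chains hw (by simp), ?_⟩
      rw [bdry_single_vertex]
    · -- i ≥ 1 : chains at (i+1).toNat ≥ 2 are bot
      apply betti_eq_zero_of_bot
      intro F hF hc
      have := hcard F hF
      omega
  · rw [betti, if_neg hineg]

-- complexes with only the empty face: betti vanishes away from -1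
lemma betti_neg_dim {K : Type} [Field K] {Γ : Finset (Finset ℕ)}
    (hcard : ∀ F ∈ Γ, F.card = 0) :
    ∀ i : ℤ, i ≠ -1 → betti K Γ i = 0 := by
  intro i hi
  apply betti_eq_zero_of_bot
  intro F hF
  rw [hcard F hF]
  omega

section Tree
variable (K : Type) [Field K]

/-- oriented edge chain with `∂ (edgeC a b) = single a - single b` -/
noncomputable def edgeC (a b : ℕ) : Finset ℕ →₀ K :=
  (if a < b then (-1:K) else 1) • Finsupp.single ({a, b} : Finset ℕ) (1:K)

lemma bdry_edgeC' {K : Type} [Field K] {a b : ℕ} (h : a ≠ b) :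
    bdry K (edgeC K a b) =
      Finsupp.single ({a} : Finset ℕ) (1:K) - Finsupp.single ({b} : Finset ℕ) (1:K) := by
  rcases lt_or_gt_of_ne h with hlt | hgt
  · rw [edgeC, if_pos hlt, map_smul, bdry_single_pair hlt]
    simp [smul_sub]
    abel
  · rw [edgeC, if_neg (by omega)]
    have : ({a, b} : Finset ℕ) = ({b, a} : Finset ℕ) := Finset.pair_comm a b
    rw [this, one_smul, bdry_single_pair hgt]

noncomputable def pathUp (r : ℕ) (P : ℕ → ℕ) (u : ℕ) : Finset ℕ →₀ K :=
  if u = r then 0 else if P u = r then edgeC K u r else edgeC K u (P u) + edgeC K (P u) r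

/-- the contraction operator associated to a (depth ≤ 2) rooted tree -/
noncomputable def hcontr (r : ℕ) (P : ℕ → ℕ) : (Finset ℕ →₀ K) →ₗ[K] (Finset ℕ →₀ K) :=
  Finsupp.lsum K fun F => LinearMap.toSpanSingleton K (Finset ℕ →₀ K)
    (if hc : F.card = 1 then pathUp K r P (F.min' (Finset.card_pos.1 (by omega)))
     else if F = ∅ then Finsupp.single ({r} : Finset ℕ) (1:K)
     else 0)

lemma hcontr_empty' {K : Type} [Field K] (r : ℕ) (P : ℕ → ℕ) :
    hcontr K r P (Finsupp.single (∅:Finset ℕ) (1:K)) = Finsupp.single ({r} : Finset ℕ) (1:K) := by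
  rw [hcontr, Finsupp.lsum_single, LinearMap.toSpanSingleton_apply]
  rw [dif_neg (by simp), if_pos rfl, one_smul]

lemma hcontr_vertex' {K : Type} [Field K] (r : ℕ) (P : ℕ → ℕ) (u : ℕ) :
    hcontr K r P (Finsupp.single ({u}:Finset ℕ) (1:K)) = pathUp K r P u := by
  rw [hcontr, Finsupp.lsum_single, LinearMap.toSpanSingleton_apply]
  rw [dif_pos (by simp), one_smul]
  simp

lemma hcontr_big' {K : Type} [Field K] (r : ℕ) (P : ℕ → ℕ) {F : Finset ℕ} (h : 2 ≤ F.card) :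
    hcontr K r P (Finsupp.single F (1:K)) = 0 := by
  rw [hcontr, Finsupp.lsum_single, LinearMap.toSpanSingleton_apply]
  rw [dif_neg (by omega), if_neg (by rintro rfl; simp_all)]
  simp

end Tree
section TreeMaster
variable {K : Type} [Field K]

theorem tree_betti_CM (Γ : Finset (Finset ℕ)) (r : ℕ) (V : Finset ℕ) (P : ℕ → ℕ)
    (hrV : r ∈ V)
    (hP : ∀ u ∈ V, u ≠ r → P u ∈ V ∧ P u ≠ u ∧ (P u = r ∨ P (P u) = r))
    (hedge : ∃ u ∈ V, u ≠ r)
    (hchar : ∀ F : Finset ℕ, F ∈ Γ ↔ F = ∅ ∨ ∃ u ∈ V, F = {u} ∨ (u ≠ r ∧ F = {u, P u})) :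
    (∀ i : ℤ, betti K Γ i = 0) ∧ IsCohenMacaulay K Γ := by
  have hempty : (∅ : Finset ℕ) ∈ Γ := (hchar ∅).2 (Or.inl rfl)
  have hvert : ∀ u ∈ V, ({u} : Finset ℕ) ∈ Γ := fun u hu => (hchar _).2 (Or.inr ⟨u, hu, Or.inl rfl⟩)
  have hedgemem : ∀ u ∈ V, u ≠ r → ({u, P u} : Finset ℕ) ∈ Γ :=
    fun u hu hur => (hchar _).2 (Or.inr ⟨u, hu, Or.inr ⟨hur, rfl⟩⟩)
  have hcard2 : ∀ F ∈ Γ, F.card ≤ 2 := by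
    intro F hF
    rcases (hchar F).1 hF with rfl | ⟨u, hu, rfl | ⟨hur, rfl⟩⟩
    · simp
    · simp
    · exact le_trans (Finset.card_insert_le _ _) (by simp)
  have hedgecard : ∀ u : ℕ, P u ≠ u → ({u, P u} : Finset ℕ).card = 2 := by
    intro u h
    rw [Finset.card_insert_of_notMem (by simp [Ne.symm h])]
    simp
  -- path chains
  have key1 : ∀ u ∈ V, pathUp K r P u ∈ chains K Γ 2 ∧
      bdry K (pathUp K r P u) =
        Finsupp.single ({u} : Finset ℕ) (1:K) - Finsupp.single ({r} : Finset ℕ) (1:K) := by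
    intro u hu
    by_cases hur : u = r
    · subst hur
      rw [pathUp, if_pos rfl]
      exact ⟨Submodule.zero_mem _, by simp⟩
    · obtain ⟨hPV, hPne, hPr⟩ := hP u hu hur
      by_cases hpu : P u = r
      · rw [pathUp, if_neg hur, if_pos hpu]
        constructor
        · rw [edgeC]
          apply Submodule.smul_mem
          have : ({u, r} : Finset ℕ) = {u, P u} := by rw [hpu]
          rw [this]
          exact single_mem_chains (hedgemem u hu hur) (hedgecard u hPne)
        · exact bdry_edgeC' hur
      · have hppu : P (P u) = r := hPr.resolve_left hpu
        rw [pathUp, if_neg hur, if_neg hpu]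
        constructor
        · apply Submodule.add_mem
          · exact Submodule.smul_mem _ _ (single_mem_chains (hedgemem u hu hur) (hedgecard u hPne))
          · apply Submodule.smul_mem
            have : ({P u, r} : Finset ℕ) = {P u, P (P u)} := by rw [hppu]
            rw [this]
            exact single_mem_chains (hedgemem _ hPV hpu) (hedgecard _ (by
              rw [hppu]; exact Ne.symm hpu))
        · rw [map_add, bdry_edgeC' (Ne.symm hPne), bdry_edgeC' hpu]
          abel
  have pathUp_step : ∀ u, u ≠ r → (P u = r ∨ P (P u) = r) →
      pathUp K r P u = edgeC K u (P u) + pathUp K r P (P u) := by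
    intro u hur hPr
    by_cases hpu : P u = r
    · rw [pathUp, if_neg hur, if_pos hpu, pathUp, if_pos hpu, add_zero, hpu]
    · have hppu : P (P u) = r := hPr.resolve_left hpu
      rw [pathUp, if_neg hur, if_neg hpu]
      congr 1
      rw [pathUp, if_neg hpu, if_pos hppu]
  have key2 : ∀ u ∈ V, u ≠ r →
      hcontr K r P (bdry K (Finsupp.single ({u, P u} : Finset ℕ) (1:K))) =
        Finsupp.single ({u, P u} : Finset ℕ) (1:K) := by
    intro u hu hur
    obtain ⟨hPV, hPne, hPr⟩ := hP u hu hur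
    have hstep := pathUp_step u hur hPr
    rcases lt_or_gt_of_ne (Ne.symm hPne) with hlt | hgt
    · -- u < P u
      rw [bdry_single_pair hlt, map_sub, hcontr_vertex', hcontr_vertex', hstep]
      rw [edgeC, if_pos hlt]
      abel_nf
      simp [smul_smul]
    · -- P u < u
      have hcomm : ({u, P u} : Finset ℕ) = {P u, u} := Finset.pair_comm u (P u)
      rw [hcomm, bdry_single_pair hgt, map_sub, hcontr_vertex', hcontr_vertex', hstep]
      rw [edgeC, if_neg (by omega), ← hcomm, one_smul]
      abel
  -- betti numbers all vanish
  have hbetti : ∀ i : ℤ, betti K Γ i = 0 := by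
    intro i
    by_cases hi : 0 ≤ i + 1
    · obtain ⟨m, hm⟩ : ∃ m : ℕ, (i+1).toNat = m := ⟨_, rfl⟩
      rcases m with _ | m
      · apply betti_eq_zero_of_le hi
        rw [hm]
        refine le_trans inf_le_left ?_
        rw [chains]
        apply Submodule.span_le.2
        rintro x ⟨F, hF, rfl⟩
        have hF' : F ∈ Γ ∧ F.card = 0 := by simpa [facesOf] using hF
        have : F = ∅ := Finset.card_eq_zero.1 hF'.2
        subst this
        exact ⟨Finsupp.single {r} 1, single_mem_chains (hvert r hrV) (by simp),
          bdry_single_vertex r⟩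
      rcases m with _ | m
      · -- m = 1
        apply betti_eq_zero_of_le hi
        rw [hm]
        have main : ∀ z ∈ chains K Γ 1, hcontr K r P z ∈ chains K Γ 2 ∧
            bdry K (hcontr K r P z) + hcontr K r P (bdry K z) = z := by
          intro z hz
          induction hz using Submodule.span_induction with
          | mem x hx =>
            obtain ⟨F, hF, rfl⟩ := hx
            have hF' : F ∈ Γ ∧ F.card = 1 := by simpa [facesOf] using hF
            obtain ⟨u, hu, hcase⟩ : ∃ u ∈ V, F = {u} := by
              rcases (hchar F).1 hF'.1 with rfl | ⟨u, hu, rfl | ⟨hur, rfl⟩⟩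
              · simp at hF'
              · exact ⟨u, hu, rfl⟩
              · exfalso
                have := hedgecard u (hP u hu hur).2.1
                omega
            subst hcase
            rw [hcontr_vertex', bdry_single_vertex, hcontr_empty', (key1 u hu).2]
            exact ⟨(key1 u hu).1, by abel⟩
          | zero => simp
          | add x y hx hy ihx ihy =>
            refine ⟨by rw [map_add]; exact Submodule.add_mem _ ihx.1 ihy.1, ?_⟩
            simp only [map_add]
            rw [add_add_add_comm, ihx.2, ihy.2]
          | smul a x hx ih =>
            refine ⟨by rw [map_smul]; exact Submodule.smul_mem _ _ ih.1, ?_⟩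
            simp only [map_smul]
            rw [← smul_add, ih.2]
        rintro z ⟨hz1, hzk⟩
        obtain ⟨hmem, hid⟩ := main z hz1
        refine ⟨hcontr K r P z, hmem, ?_⟩
        rw [LinearMap.mem_ker.1 hzk, map_zero, add_zero] at hid
        exact hid
      rcases m with _ | m
      · -- m = 2
        apply betti_eq_zero_of_le hi
        rw [hm]
        have main2 : ∀ z ∈ chains K Γ 2, hcontr K r P (bdry K z) = z := by
          intro z hz
          induction hz using Submodule.span_induction with
          | mem x hx =>
            obtain ⟨F, hF, rfl⟩ := hx
            have hF' : F ∈ Γ ∧ F.card = 2 := by simpa [facesOf] using hF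
            obtain ⟨u, hu, hur, hcase⟩ : ∃ u ∈ V, u ≠ r ∧ F = {u, P u} := by
              rcases (hchar F).1 hF'.1 with rfl | ⟨u, hu, rfl | ⟨hur, rfl⟩⟩
              · simp at hF'
              · exfalso; have := hF'.2; simp at this
              · exact ⟨u, hu, hur, rfl⟩
            subst hcase
            exact key2 u hu hur
          | zero => simp
          | add x y hx hy ihx ihy => rw [map_add, map_add, ihx, ihy]
          | smul a x hx ih => rw [map_smul, map_smul, ih]
        rintro z ⟨hz1, hzk⟩
        have : z = 0 := by
          have := main2 z hz1
          rw [LinearMap.mem_ker.1 hzk, map_zero] at this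
          exact this.symm
        rw [this]
        exact Submodule.zero_mem _
      · -- m ≥ 3
        apply betti_eq_zero_of_bot
        intro F hF
        have := hcard2 F hF
        omega
    · rw [betti, if_neg hi]
  have hsup : Γ.sup Finset.card = 2 := by
    apply le_antisymm
    · exact Finset.sup_le hcard2
    · obtain ⟨u₀, hu₀, hur₀⟩ := hedge
      calc 2 = ({u₀, P u₀} : Finset ℕ).card := (hedgecard u₀ (hP u₀ hu₀ hur₀).2.1).symm
        _ ≤ _ := Finset.le_sup (hedgemem u₀ hu₀ hur₀)
  have hdim : dimZ Γ = 1 := by rw [dimZ, hsup]; norm_num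
  refine ⟨hbetti, ?_⟩
  intro F hF i hi
  have hnbr : ∀ u ∈ V, ∃ w ∈ V, w ≠ u ∧ ({w} ∪ {u} : Finset ℕ) ∈ Γ := by
    intro u hu
    by_cases hur : u = r
    · obtain ⟨u₀, hu₀, hur₀⟩ := hedge
      obtain ⟨hPV, hPne, hPr⟩ := hP u₀ hu₀ hur₀
      by_cases hpu : P u₀ = r
      · refine ⟨u₀, hu₀, by rw [hur]; exact hur₀, ?_⟩
        have he : ({u₀} ∪ {u} : Finset ℕ) = {u₀, P u₀} := by
          rw [hur, hpu, Finset.insert_eq]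
        rw [he]
        exact hedgemem u₀ hu₀ hur₀
      · have hppu : P (P u₀) = r := hPr.resolve_left hpu
        refine ⟨P u₀, hPV, by rw [hur]; exact hpu, ?_⟩
        have he : ({P u₀} ∪ {u} : Finset ℕ) = {P u₀, P (P u₀)} := by
          rw [hur, hppu, Finset.insert_eq]
        rw [he]
        exact hedgemem _ hPV hpu
    · obtain ⟨hPV, hPne, hPr⟩ := hP u hu hur
      refine ⟨P u, hPV, hPne, ?_⟩
      have he : ({P u} ∪ {u} : Finset ℕ) = {u, P u} := by
        rw [Finset.pair_comm u (P u), Finset.insert_eq]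
      rw [he]
      exact hedgemem u hu hur
  rcases (hchar F).1 hF with rfl | ⟨u, hu, rfl | ⟨hur, rfl⟩⟩
  · rw [link_empty]
    exact hbetti i
  · -- F = {u}
    obtain ⟨w, hwV, hwu, hwm⟩ := hnbr u hu
    have h0' : (∅ : Finset ℕ) ∈ link Γ {u} :=
      mem_link.2 ⟨hempty, by simp, by simpa using hvert u hu⟩
    have hw' : ({w} : Finset ℕ) ∈ link Γ {u} :=
      mem_link.2 ⟨hvert w hwV, by simp [hwu], hwm⟩
    have hcard' : ∀ G ∈ link Γ {u}, G.card ≤ 1 := by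
      intro G hG
      obtain ⟨hG1, hG2, hG3⟩ := mem_link.1 hG
      have h1 := hcard2 _ hG3
      have hu' : u ∉ G := fun h => (Finset.disjoint_left.1 hG2 h) (by simp)
      have h2 : (G ∪ {u}).card = G.card + 1 := by
        rw [Finset.union_comm, ← Finset.insert_eq,
          Finset.card_insert_of_notMem hu']
      omega
    refine betti_zero_dim h0' w hw' hcard' i ?_
    intro h
    apply hi
    rw [hdim, h]
    simp
  · -- F = {u, P u}
    have hc2 : ({u, P u} : Finset ℕ).card = 2 := hedgecard u (hP u hu hur).2.1
    have hcard' : ∀ G ∈ link Γ {u, P u}, G.card = 0 := by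
      intro G hG
      obtain ⟨hG1, hG2, hG3⟩ := mem_link.1 hG
      have h1 := hcard2 _ hG3
      have h2 : (G ∪ {u, P u}).card = G.card + 2 := by
        rw [Finset.card_union_of_disjoint hG2, hc2]
      omega
    refine betti_neg_dim hcard' i ?_
    intro h
    apply hi
    rw [hdim, h, hc2]
    norm_num
end TreeMaster
section ModRepLemmas

lemma modRep_bounds {n : ℕ} (hn : 0 < n) (i : ℤ) : 1 ≤ modRep n i ∧ modRep n i ≤ n := by
  rw [modRep]
  have h1 : 0 ≤ (i - 1) % (n : ℤ) := Int.emod_nonneg _ (by exact_mod_cast hn.ne')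
  have h2 : (i - 1) % (n : ℤ) < n := Int.emod_lt_of_pos _ (by exact_mod_cast hn)
  omega

lemma modRep_mem_Icc {n : ℕ} (hn : 0 < n) (i : ℤ) : modRep n i ∈ Finset.Icc 1 n := by
  rw [Finset.mem_Icc]
  exact modRep_bounds hn i

lemma modRep_dvd_sub {n : ℕ} (hn : 0 < n) (i : ℤ) : (n : ℤ) ∣ ((modRep n i : ℤ) - i) := by
  have h1 : 0 ≤ (i - 1) % (n : ℤ) := Int.emod_nonneg _ (by exact_mod_cast hn.ne')
  have hcast : ((modRep n i : ℕ) : ℤ) = (i - 1) % (n:ℤ) + 1 := by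
    rw [modRep]; push_cast; omega
  refine ⟨-((i-1)/(n:ℤ)), ?_⟩
  rw [hcast, Int.emod_def]
  ring

lemma modRep_eq_iff {n : ℕ} (hn : 0 < n) {i j : ℤ} :
    modRep n i = modRep n j ↔ (n : ℤ) ∣ (i - j) := by
  constructor
  · intro h
    have h1 := modRep_dvd_sub hn i
    have h2 := modRep_dvd_sub hn j
    rw [h] at h1
    have := dvd_sub h2 h1
    simpa using this
  · intro h
    have h1 : 0 ≤ (i - 1) % (n : ℤ) := Int.emod_nonneg _ (by exact_mod_cast hn.ne')
    have hmm : (i - 1) % (n:ℤ) = (j - 1) % (n:ℤ) := by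
      rw [Int.emod_eq_emod_iff_emod_sub_eq_zero]
      have heq : (i - 1) - (j - 1) = i - j := by ring
      rw [heq]
      exact Int.emod_eq_zero_of_dvd h
    rw [modRep, modRep, hmm]

lemma modRep_nat {n a : ℕ} (h1 : 1 ≤ a) (h2 : a ≤ n) : modRep n (a : ℤ) = a := by
  rw [modRep]
  have : ((a:ℤ) - 1) % (n:ℤ) = (a:ℤ) - 1 := Int.emod_eq_of_lt (by omega) (by omega)
  rw [this]
  omega

lemma key_ndvd {p : ℕ} (hp : 2 ≤ p) {x : ℤ} (hb : |x| < 2*(3*(p:ℤ)-1))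
    (h0 : x ≠ 0) (hn1 : x ≠ 3*(p:ℤ)-1) (hn2 : x ≠ -(3*(p:ℤ)-1)) :
    ¬ ((3*(p:ℤ)-1) ∣ x) := by
  rintro ⟨c, rfl⟩
  have hN : (0:ℤ) < 3*(p:ℤ)-1 := by
    have : (2:ℤ) ≤ (p:ℤ) := by exact_mod_cast hp
    omega
  have habs : |3*(p:ℤ)-1| * |c| < 2*(3*(p:ℤ)-1) := by rw [← abs_mul]; exact hb
  rw [abs_of_pos hN] at habs
  have hc : |c| < 2 := by
    by_contra hcon
    push_neg at hcon
    nlinarith [abs_nonneg c]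
  rw [abs_lt] at hc
  obtain ⟨hc1, hc2⟩ := hc
  interval_cases c <;> simp_all
end ModRepLemmas
section Combinatorics

lemma subset_pair {a b : ℕ} {F : Finset ℕ} (h : F ⊆ ({a, b} : Finset ℕ)) :
    F = ∅ ∨ F = {a} ∨ F = {b} ∨ F = {a, b} := by
  by_cases ha : a ∈ F <;> by_cases hb : b ∈ F
  · refine Or.inr (Or.inr (Or.inr ?_))
    apply Finset.Subset.antisymm h
    intro x hx
    rcases Finset.mem_insert.1 hx with rfl | hx
    · exact ha
    · rw [Finset.mem_singleton] at hx; subst hx; exact hb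
  · refine Or.inr (Or.inl ?_)
    ext x
    simp only [Finset.mem_singleton]
    constructor
    · intro hx
      rcases Finset.mem_insert.1 (h hx) with rfl | h2
      · rfl
      · rw [Finset.mem_singleton] at h2; subst h2; exact absurd hx hb
    · rintro rfl; exact ha
  · refine Or.inr (Or.inr (Or.inl ?_))
    ext x
    simp only [Finset.mem_singleton]
    constructor
    · intro hx
      rcases Finset.mem_insert.1 (h hx) with rfl | h2
      · exact absurd hx ha
      · rw [Finset.mem_singleton] at h2; exact h2
    · rintro rfl; exact hb
  · refine Or.inl (Finset.eq_empty_of_forall_notMem ?_)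
    intro x hx
    rcases Finset.mem_insert.1 (h hx) with rfl | h2
    · exact ha hx
    · rw [Finset.mem_singleton] at h2; subst h2; exact hb hx

lemma hcard3 {x y z : ℕ} (h1 : x ≠ y) (h2 : x ≠ z) (h3 : y ≠ z) :
    ({x, y, z} : Finset ℕ).card = 3 := by
  rw [Finset.card_insert_of_notMem (by simp [h1, h2]),
    Finset.card_insert_of_notMem (by simp [h3])]
  simp

/-- vertex `v+k` (mod `n`) -/
def vvD (p v : ℕ) (k : ℤ) : ℕ := modRep (3*p-1) ((v:ℤ) + k)

/-- pendant indices at `v+1` -/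
def AD (p v : ℕ) (S : Finset (ℕ×ℕ)) : Finset ℕ := (Finset.Icc 1 (p-2)).filter
  (fun j => (v, j) ∈ S ∨ (modRep (3*p-1) ((v:ℤ) - 1 - 3*((p:ℤ)-1-(j:ℤ))), p-1-j) ∈ S)

/-- 2-path indices at `v-1` -/
def BD (p v : ℕ) (S : Finset (ℕ×ℕ)) : Finset ℕ := (Finset.Icc 1 (p-2)).filter
  (fun j => (modRep (3*p-1) ((v:ℤ) - 2 - 3*(j:ℤ)), j) ∈ S ∨ (modRep (3*p-1) ((v:ℤ) - 1), p-1-j) ∈ S)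

def VD (p v : ℕ) (S : Finset (ℕ×ℕ)) : Finset ℕ :=
  ({vvD p v (-2), vvD p v (-1), vvD p v 1, vvD p v 2} : Finset ℕ)
    ∪ (AD p v S).image (fun (j:ℕ) => vvD p v (2+3*(j:ℤ)))
    ∪ (BD p v S).image (fun (j:ℕ) => vvD p v (-1-3*(j:ℤ)))
    ∪ (BD p v S).image (fun (j:ℕ) => vvD p v (-2-3*(j:ℤ)))

noncomputable def PD (p v : ℕ) (S : Finset (ℕ×ℕ)) : ℕ → ℕ := fun u =>
  if u = vvD p v 2 ∨ u ∈ (AD p v S).image (fun (j:ℕ) => vvD p v (2+3*(j:ℤ))) then vvD p v 1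
  else if u = vvD p v 1 ∨ u ∈ (BD p v S).image (fun (j:ℕ) => vvD p v (-1-3*(j:ℤ))) then vvD p v (-1)
  else modRep (3*p-1) ((u:ℤ) + 1)

section Fixed
variable {p : ℕ} (hp : 2 ≤ p)

lemma Ncast (hp : 2 ≤ p) : ((3*p-1 : ℕ) : ℤ) = 3*(p:ℤ)-1 := by omega

lemma N0 (hp : 2 ≤ p) : 0 < 3*p-1 := by omega

lemma vv_eq_iff (hp : 2 ≤ p) (v : ℕ) {k k' : ℤ} :
    vvD p v k = vvD p v k' ↔ ((3*p-1 : ℕ) : ℤ) ∣ (k - k') := by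
  rw [vvD, vvD, modRep_eq_iff (N0 hp)]
  constructor <;> intro h
  · have heq : (v:ℤ) + k - ((v:ℤ) + k') = k - k' := by ring
    rwa [heq] at h
  · have heq : (v:ℤ) + k - ((v:ℤ) + k') = k - k' := by ring
    rwa [heq]

lemma vv_ne (hp : 2 ≤ p) (v : ℕ) {k k' : ℤ}
    (hb1 : -(2*(3*(p:ℤ)-1)) < k - k') (hb2 : k - k' < 2*(3*(p:ℤ)-1))
    (h0 : k - k' ≠ 0) (h1 : k - k' ≠ 3*(p:ℤ)-1) (h2 : k - k' ≠ -(3*(p:ℤ)-1)) :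
    vvD p v k ≠ vvD p v k' := by
  rw [Ne, vv_eq_iff hp v, Ncast hp]
  exact key_ndvd hp (abs_lt.2 ⟨hb1, hb2⟩) h0 h1 h2

lemma vv_succ (hp : 2 ≤ p) (v : ℕ) (k : ℤ) :
    modRep (3*p-1) ((vvD p v k : ℤ) + 1) = vvD p v (k+1) := by
  rw [vvD, vvD]
  apply (modRep_eq_iff (N0 hp)).2
  have h := modRep_dvd_sub (N0 hp) ((v:ℤ)+k)
  have heq : ((modRep (3*p-1) ((v:ℤ)+k) : ℤ) + 1) - ((v:ℤ) + (k+1))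
      = (modRep (3*p-1) ((v:ℤ)+k) : ℤ) - ((v:ℤ)+k) := by ring
  rw [heq]
  exact h

lemma mr_congr (hp : 2 ≤ p) {
    a b : ℤ} (h : ((3*p-1:ℕ):ℤ) ∣ (a - b)) : modRep (3*p-1) a = modRep (3*p-1) b :=
  (modRep_eq_iff (N0 hp)).2 h

end Fixed
end Combinatorics
section Pcomp
variable {p : ℕ} (v : ℕ) (S : Finset (ℕ×ℕ))

lemma ndvdN (hp : 2 ≤ p) {x : ℤ} (hb1 : -(2*(3*(p:ℤ)-1)) < x) (hb2 : x < 2*(3*(p:ℤ)-1))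
    (h0 : x ≠ 0) (h1 : x ≠ 3*(p:ℤ)-1) (h2 : x ≠ -(3*(p:ℤ)-1)) : ¬ ((3*p-1:ℕ):ℤ) ∣ x := by
  rw [Ncast hp]; exact key_ndvd hp (abs_lt.2 ⟨hb1, hb2⟩) h0 h1 h2

lemma AD_bounds {j : ℕ} (hj : j ∈ AD p v S) : 1 ≤ j ∧ j ≤ p - 2 := by
  have := (Finset.mem_filter.1 hj).1
  rwa [Finset.mem_Icc] at this

lemma BD_bounds {j : ℕ} (hj : j ∈ BD p v S) : 1 ≤ j ∧ j ≤ p - 2 := by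
  have := (Finset.mem_filter.1 hj).1
  rwa [Finset.mem_Icc] at this

lemma not_in_pend (hp : 2 ≤ p) {k : ℤ}
    (h : ∀ j : ℕ, 1 ≤ j → j ≤ p-2 → ¬ ((3*p-1:ℕ):ℤ) ∣ (k - (2+3*(j:ℤ)))) :
    vvD p v k ∉ (AD p v S).image (fun (j:ℕ) => vvD p v (2+3*(j:ℤ))) := by
  simp only [Finset.mem_image]
  rintro ⟨j, hj, hEq⟩
  obtain ⟨h1, h2⟩ := AD_bounds v S hj
  exact h j h1 h2 ((vv_eq_iff hp v).1 hEq.symm)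

lemma not_in_lev (hp : 2 ≤ p) {k : ℤ}
    (h : ∀ j : ℕ, 1 ≤ j → j ≤ p-2 → ¬ ((3*p-1:ℕ):ℤ) ∣ (k - (-1-3*(j:ℤ)))) :
    vvD p v k ∉ (BD p v S).image (fun (j:ℕ) => vvD p v (-1-3*(j:ℤ))) := by
  simp only [Finset.mem_image]
  rintro ⟨j, hj, hEq⟩
  obtain ⟨h1, h2⟩ := BD_bounds v S hj
  exact h j h1 h2 ((vv_eq_iff hp v).1 hEq.symm)

lemma vv_ne' (hp : 2 ≤ p) {k k' : ℤ}
    (hb1 : -(2*(3*(p:ℤ)-1)) < k - k') (hb2 : k - k' < 2*(3*(p:ℤ)-1))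
    (h0 : k - k' ≠ 0) (h1 : k - k' ≠ 3*(p:ℤ)-1) (h2 : k - k' ≠ -(3*(p:ℤ)-1)) :
    vvD p v k ≠ vvD p v k' := vv_ne hp v hb1 hb2 h0 h1 h2

lemma PD_vv2 : PD p v S (vvD p v 2) = vvD p v 1 := by
  simp only [PD]
  simp

lemma PD_pend {j : ℕ} (hj : j ∈ AD p v S) :
    PD p v S (vvD p v (2+3*(j:ℤ))) = vvD p v 1 := by
  simp only [PD]
  rw [if_pos (Or.inr (Finset.mem_image.2 ⟨j, hj, rfl⟩))]

lemma PD_vv1 (hp : 2 ≤ p) : PD p v S (vvD p v 1) = vvD p v (-1) := by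
  simp only [PD]
  rw [if_neg]
  · simp
  rintro (h | h)
  · exact vv_ne' v hp (k := 1) (k' := 2) (by omega) (by omega) (by omega) (by omega) (by omega) h
  · exact not_in_pend v S hp
      (fun j h1 h2 => ndvdN hp (by omega) (by omega) (by omega) (by omega) (by omega)) h

lemma PD_lev (hp : 2 ≤ p) {j : ℕ} (hj : j ∈ BD p v S) :
    PD p v S (vvD p v (-1-3*(j:ℤ))) = vvD p v (-1) := by
  obtain ⟨h1, h2⟩ := BD_bounds v S hj
  simp only [PD]
  rw [if_neg, if_pos (Or.inr (Finset.mem_image.2 ⟨j, hj, rfl⟩))]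
  rintro (h | h)
  · exact vv_ne' v hp (k := -1-3*(j:ℤ)) (k' := 2)
      (by omega) (by omega) (by omega) (by omega) (by omega) h
  · exact not_in_pend v S hp
      (fun j' h1' h2' => ndvdN hp (by omega) (by omega) (by omega) (by omega) (by omega)) h

lemma PD_deep (hp : 2 ≤ p) {j : ℕ} (hj : j ∈ BD p v S) :
    PD p v S (vvD p v (-2-3*(j:ℤ))) = vvD p v (-1-3*(j:ℤ)) := by
  obtain ⟨h1, h2⟩ := BD_bounds v S hj
  simp only [PD]
  rw [if_neg, if_neg]
  · have harg : (-2-3*(j:ℤ)) + 1 = -1-3*(j:ℤ) := by ring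
    rw [vv_succ hp v, harg]
  · rintro (h | h)
    · exact vv_ne' v hp (k := -2-3*(j:ℤ)) (k' := 1)
        (by omega) (by omega) (by omega) (by omega) (by omega) h
    · exact not_in_lev v S hp
        (fun j' h1' h2' => ndvdN hp (by omega) (by omega) (by omega) (by omega) (by omega)) h
  · rintro (h | h)
    · exact vv_ne' v hp (k := -2-3*(j:ℤ)) (k' := 2)
        (by omega) (by omega) (by omega) (by omega) (by omega) h
    · exact not_in_pend v S hp
        (fun j' h1' h2' => ndvdN hp (by omega) (by omega) (by omega) (by omega) (by omega)) h

lemma PD_m2 (hp : 2 ≤ p) : PD p v S (vvD p v (-2)) = vvD p v (-1) := by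
  simp only [PD]
  rw [if_neg, if_neg]
  · have harg : (-2 : ℤ) + 1 = -1 := by ring
    rw [vv_succ hp v, harg]
  · rintro (h | h)
    · exact vv_ne' v hp (k := (-2:ℤ)) (k' := 1)
        (by omega) (by omega) (by omega) (by omega) (by omega) h
    · exact not_in_lev v S hp
        (fun j' h1' h2' => ndvdN hp (by omega) (by omega) (by omega) (by omega) (by omega)) h
  · rintro (h | h)
    · exact vv_ne' v hp (k := (-2:ℤ)) (k' := 2)
        (by omega) (by omega) (by omega) (by omega) (by omega) h
    · exact not_in_pend v S hp
        (fun j' h1' h2' => ndvdN hp (by omega) (by omega) (by omega) (by omega) (by omega)) h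

end Pcomp
def XD (p : ℕ) (S : Finset (ℕ×ℕ)) : Finset (Finset ℕ) :=
  SigmaA p ∪ S.biUnion fun q => DeltaA p q.1 q.2

lemma mem_XD {p : ℕ} (S : Finset (ℕ×ℕ)) (F : Finset ℕ) : F ∈ XD p S ↔
    (∃ i ∈ Finset.Icc 1 (3*p-1), F ⊆ {modRep (3*p-1) (i:ℤ), modRep (3*p-1) ((i:ℤ)+1),
        modRep (3*p-1) ((i:ℤ)+2)}) ∨
    (∃ q ∈ S, F ⊆ {modRep (3*p-1) (q.1:ℤ), modRep (3*p-1) ((q.1:ℤ)+1),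
        modRep (3*p-1) ((q.1:ℤ)+2+3*(q.2:ℤ))} ∨
      F ⊆ {modRep (3*p-1) ((q.1:ℤ)+1+3*(q.2:ℤ)), modRep (3*p-1) ((q.1:ℤ)+2+3*(q.2:ℤ)),
        modRep (3*p-1) ((q.1:ℤ)+1)}) := by
  rw [XD]
  simp only [Finset.mem_union, SigmaA, DeltaA, Finset.mem_biUnion, Finset.mem_powerset]

section LinkAnalysis

lemma XD_sub_sigma {p : ℕ} (hp : 2 ≤ p) (S : Finset (ℕ × ℕ)) : ∀ (a : ℤ) (F : Finset ℕ),
    F ⊆ {modRep (3*p-1) a, modRep (3*p-1) (a+1), modRep (3*p-1) (a+2)} → F ∈ XD p S := by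
  have hN0 := N0 hp
  have hshift : ∀ (a b c : ℤ), modRep (3*p-1) a = modRep (3*p-1) b →
      modRep (3*p-1) (a+c) = modRep (3*p-1) (b+c) := by
    intro a b c h
    rw [modRep_eq_iff hN0] at h ⊢
    have heq : a + c - (b + c) = a - b := by ring
    rwa [heq]
  intro a F hsub
  refine (mem_XD S F).2 (Or.inl ⟨modRep (3*p-1) a, modRep_mem_Icc hN0 a, ?_⟩)
  have e0 : modRep (3*p-1) ((modRep (3*p-1) a : ℕ) : ℤ) = modRep (3*p-1) a :=
    mr_congr hp (modRep_dvd_sub hN0 a)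
  have e1 : modRep (3*p-1) (((modRep (3*p-1) a : ℕ) : ℤ)+1) = modRep (3*p-1) (a+1) :=
    hshift _ _ 1 e0
  have e2 : modRep (3*p-1) (((modRep (3*p-1) a : ℕ) : ℤ)+2) = modRep (3*p-1) (a+2) :=
    hshift _ _ 2 e0
  rw [e0, e1, e2]
  exact hsub

lemma XD_sub_T1 {p : ℕ} (S : Finset (ℕ × ℕ)) : ∀ (i j : ℕ), (i, j) ∈ S → ∀ F : Finset ℕ,
    F ⊆ {modRep (3*p-1) (i:ℤ), modRep (3*p-1) ((i:ℤ)+1),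
      modRep (3*p-1) ((i:ℤ)+2+3*(j:ℤ))} → F ∈ XD p S :=
  fun i j hq F hsub => (mem_XD S F).2 (Or.inr ⟨(i, j), hq, Or.inl hsub⟩)

lemma XD_sub_T2 {p : ℕ} (S : Finset (ℕ × ℕ)) : ∀ (i j : ℕ), (i, j) ∈ S → ∀ F : Finset ℕ,
    F ⊆ {modRep (3*p-1) ((i:ℤ)+1+3*(j:ℤ)), modRep (3*p-1) ((i:ℤ)+2+3*(j:ℤ)),
      modRep (3*p-1) ((i:ℤ)+1)} → F ∈ XD p S :=
  fun i j hq F hsub => (mem_XD S F).2 (Or.inr ⟨(i, j), hq, Or.inr hsub⟩)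

lemma XD_down {p : ℕ} (S : Finset (ℕ × ℕ)) : ∀ {G G' : Finset ℕ}, G' ⊆ G → G ∈ XD p S → G' ∈ XD p S := by
  intro G G' hsubGG hG
  rcases (mem_XD S G).1 hG with ⟨i, hi, hs⟩ | ⟨q, hqS, hs | hs⟩
  · exact (mem_XD S G').2 (Or.inl ⟨i, hi, hsubGG.trans hs⟩)
  · exact (mem_XD S G').2 (Or.inr ⟨q, hqS, Or.inl (hsubGG.trans hs)⟩)
  · exact (mem_XD S G').2 (Or.inr ⟨q, hqS, Or.inr (hsubGG.trans hs)⟩)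

-- V membership helpers
lemma VD_m2 {p : ℕ} (S : Finset (ℕ × ℕ)) (v : ℕ) : vvD p v (-2) ∈ VD p v S := by
  rw [VD]
  exact Finset.mem_union_left _ (Finset.mem_union_left _ (Finset.mem_union_left _ (by simp)))
lemma VD_m1 {p : ℕ} (S : Finset (ℕ × ℕ)) (v : ℕ) : vvD p v (-1) ∈ VD p v S := by
  rw [VD]
  exact Finset.mem_union_left _ (Finset.mem_union_left _ (Finset.mem_union_left _ (by simp)))
lemma VD_1 {p : ℕ} (S : Finset (ℕ × ℕ)) (v : ℕ) : vvD p v 1 ∈ VD p v S := by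
  rw [VD]
  exact Finset.mem_union_left _ (Finset.mem_union_left _ (Finset.mem_union_left _ (by simp)))
lemma VD_2 {p : ℕ} (S : Finset (ℕ × ℕ)) (v : ℕ) : vvD p v 2 ∈ VD p v S := by
  rw [VD]
  exact Finset.mem_union_left _ (Finset.mem_union_left _ (Finset.mem_union_left _ (by simp)))
lemma VD_pend {p : ℕ} (S : Finset (ℕ × ℕ)) (v : ℕ) : ∀ j ∈ AD p v S, vvD p v (2+3*(j:ℤ)) ∈ VD p v S := by
  intro j hj
  rw [VD]
  exact Finset.mem_union_left _ (Finset.mem_union_left _ (Finset.mem_union_right _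
    (Finset.mem_image.2 ⟨j, hj, rfl⟩)))
lemma VD_lev {p : ℕ} (S : Finset (ℕ × ℕ)) (v : ℕ) : ∀ j ∈ BD p v S, vvD p v (-1-3*(j:ℤ)) ∈ VD p v S := by
  intro j hj
  rw [VD]
  exact Finset.mem_union_left _ (Finset.mem_union_right _ (Finset.mem_image.2 ⟨j, hj, rfl⟩))
lemma VD_deep {p : ℕ} (S : Finset (ℕ × ℕ)) (v : ℕ) : ∀ j ∈ BD p v S, vvD p v (-2-3*(j:ℤ)) ∈ VD p v S := by
  intro j hj
  rw [VD]
  exact Finset.mem_union_right _ (Finset.mem_image.2 ⟨j, hj, rfl⟩)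

set_option maxHeartbeats 1000000 in
lemma link_forward {p : ℕ} (hp : 2 ≤ p) (S : Finset (ℕ × ℕ))
    (hS : S ⊆ (Finset.Icc 1 (3 * p - 1)) ×ˢ (Finset.Icc 1 (p - 2)))
    (v : ℕ) (hv1 : 1 ≤ v) (hv2 : v ≤ 3*p-1) :
    ∀ F ∈ link (XD p S) {v}, F = ∅ ∨ ∃ u ∈ VD p v S,
      F = {u} ∨ (u ≠ vvD p v (-1) ∧ F = {u, PD p v S u}) := by
  classical
  have hN0 := N0 hp
  have hmrarg : ∀ a b : ℤ, a = b → modRep (3*p-1) a = modRep (3*p-1) b :=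
    fun a b h => by rw [h]
  have hvarg : ∀ t t' : ℤ, t = t' → vvD p v t = vvD p v t' := fun t t' h => by rw [h]
  have hshift : ∀ (a b c : ℤ), modRep (3*p-1) a = modRep (3*p-1) b →
      modRep (3*p-1) (a+c) = modRep (3*p-1) (b+c) := by
    intro a b c h
    rw [modRep_eq_iff hN0] at h ⊢
    have heq : a + c - (b + c) = a - b := by ring
    rwa [heq]
  have hvvshift : ∀ (x t c : ℤ), modRep (3*p-1) x = vvD p v t →
      modRep (3*p-1) (x + c) = vvD p v (t + c) := by
    intro x t c h
    rw [vvD] at h ⊢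
    have h2 := hshift x ((v:ℤ)+t) c h
    rw [h2]
    exact hmrarg _ _ (by ring)
  have hv0 : vvD p v 0 = v := by
    rw [vvD, hmrarg ((v:ℤ)+0) (v:ℤ) (by ring)]
    exact modRep_nat hv1 hv2
  have hvvmrc : ∀ (t t' c : ℤ), t - t' = ((3*p-1:ℕ):ℤ)*c → vvD p v t = vvD p v t' :=
    fun t t' c h => (vv_eq_iff hp v).2 ⟨c, h⟩
  have hcomp : ∀ k : ℤ, modRep (3*p-1) ((v:ℤ)+k) = vvD p v k := fun k => rfl
  have hvne : ∀ k : ℤ, -(2*(3*(p:ℤ)-1)) < k → k < 2*(3*(p:ℤ)-1) → k ≠ 0 →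
      k ≠ 3*(p:ℤ)-1 → k ≠ -(3*(p:ℤ)-1) → vvD p v k ≠ v := by
    intro k h1 h2 h3 h4 h5 h
    exact vv_ne' v hp (k := k) (k' := 0) (by omega) (by omega) (by omega) (by omega) (by omega)
      (h.trans hv0.symm)
  have hrole : ∀ (i : ℕ) (k : ℤ), v = modRep (3*p-1) ((i:ℤ)+k) →
      modRep (3*p-1) (i:ℤ) = vvD p v (-k) := by
    intro i k h
    rw [vvD]
    apply (modRep_eq_iff hN0).2
    have hd := modRep_dvd_sub hN0 ((i:ℤ)+k)
    rw [← h] at hd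
    have heq : (i:ℤ) - ((v:ℤ) + (-k)) = -(((v:ℕ):ℤ) - ((i:ℤ)+k)) := by ring
    rw [heq]
    exact dvd_neg.2 hd
  have hid : ∀ (i : ℕ) (k : ℤ), 1 ≤ i → i ≤ 3*p-1 → v = modRep (3*p-1) ((i:ℤ)+k) →
      i = modRep (3*p-1) ((v:ℤ) + (-k)) := by
    intro i k h1 h2 h
    have h3 := hrole i k h
    rw [vvD] at h3
    rw [← h3, modRep_nat h1 h2]
  have hSq : ∀ q ∈ S, 1 ≤ q.1 ∧ q.1 ≤ 3*p-1 ∧ 1 ≤ q.2 ∧ q.2 ≤ p-2 := by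
    intro q hq
    have := hS hq
    rw [Finset.mem_product, Finset.mem_Icc, Finset.mem_Icc] at this
    exact ⟨this.1.1, this.1.2, this.2.1, this.2.2⟩
  have hswap12 : ∀ x y z : ℕ, ({x,y,z} : Finset ℕ) = {y,x,z} :=
    fun x y z => Finset.insert_comm x y {z}
  have hswap23 : ∀ x y z : ℕ, ({x,y,z} : Finset ℕ) = {x,z,y} :=
    fun x y z => by rw [Finset.pair_comm y z]
  have hV1 := VD_1 (p := p) S v; have hV2 := VD_2 (p := p) S v
  have hVm1 := VD_m1 (p := p) S v; have hVm2 := VD_m2 (p := p) S v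
  have hVpend := VD_pend (p := p) S v; have hVlev := VD_lev (p := p) S v
  have hVdeep := VD_deep (p := p) S v
  have hmemX := mem_XD (p := p) S
  have hforward : ∀ F ∈ link (XD p S) {v}, F = ∅ ∨ ∃ u ∈ VD p v S,
      F = {u} ∨ (u ≠ vvD p v (-1) ∧ F = {u, PD p v S u}) := by
    intro F hF
    obtain ⟨hFX, hdisj, hFvX⟩ := mem_link.1 hF
    have hvF : v ∉ F := fun h => (Finset.disjoint_left.1 hdisj h) (Finset.mem_singleton_self v)
    have hvmem : v ∈ F ∪ {v} := Finset.mem_union_right _ (Finset.mem_singleton_self v)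
    have hfin : ∀ a u : ℕ, F ∪ {v} ⊆ {v, a, u} → a ∈ VD p v S → u ∈ VD p v S →
        u ≠ vvD p v (-1) → PD p v S u = a →
        (F = ∅ ∨ ∃ w ∈ VD p v S, F = {w} ∨ (w ≠ vvD p v (-1) ∧ F = {w, PD p v S w})) := by
      intro a u hsub haV huV hur hPu
      have hFp : F ⊆ {a, u} := by
        intro x hx
        have hxm := hsub (Finset.mem_union_left _ hx)
        rcases Finset.mem_insert.1 hxm with rfl | h2
        · exact absurd hx hvF
        · exact h2
      rcases subset_pair hFp with rfl | rfl | rfl | rfl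
      · exact Or.inl rfl
      · exact Or.inr ⟨a, haV, Or.inl rfl⟩
      · exact Or.inr ⟨u, huV, Or.inl rfl⟩
      · refine Or.inr ⟨u, huV, Or.inr ⟨hur, ?_⟩⟩
        rw [hPu, Finset.pair_comm]
    rcases (hmemX _).1 hFvX with ⟨i, hiI, hsub⟩ | ⟨q, hq, hsub | hsub⟩
    · -- sigma triangles
      rw [Finset.mem_Icc] at hiI
      have hv3 := hsub hvmem
      simp only [Finset.mem_insert, Finset.mem_singleton] at hv3
      rcases hv3 with hv | hv | hv
      · -- v = i
        have base : modRep (3*p-1) (i:ℤ) = vvD p v 0 :=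
          (hrole i 0 (by rwa [add_zero])).trans (hvarg _ _ (by norm_num))
        have e1 : modRep (3*p-1) ((i:ℤ)+1) = vvD p v 1 :=
          (hvvshift _ _ 1 base).trans (hvarg _ _ (by norm_num))
        have e2 : modRep (3*p-1) ((i:ℤ)+2) = vvD p v 2 :=
          (hvvshift _ _ 2 base).trans (hvarg _ _ (by norm_num))
        rw [← hv, e1, e2] at hsub
        refine hfin (vvD p v 1) (vvD p v 2) hsub hV1 hV2
          (vv_ne' v hp (by omega) (by omega) (by omega) (by omega) (by omega)) (PD_vv2 v S)
      · -- v = i+1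
        have base : modRep (3*p-1) (i:ℤ) = vvD p v (-1) := hrole i 1 hv
        have e2 : modRep (3*p-1) ((i:ℤ)+2) = vvD p v 1 :=
          (hvvshift _ _ 2 base).trans (hvarg _ _ (by norm_num))
        rw [base, ← hv, e2, hswap12] at hsub
        refine hfin (vvD p v (-1)) (vvD p v 1) hsub hVm1 hV1
          (vv_ne' v hp (by omega) (by omega) (by omega) (by omega) (by omega)) (PD_vv1 v S hp)
      · -- v = i+2
        have base : modRep (3*p-1) (i:ℤ) = vvD p v (-2) := hrole i 2 hv
        have e1 : modRep (3*p-1) ((i:ℤ)+1) = vvD p v (-1) :=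
          (hvvshift _ _ 1 base).trans (hvarg _ _ (by norm_num))
        rw [base, e1, ← hv, hswap23, hswap12, hswap23] at hsub
        refine hfin (vvD p v (-1)) (vvD p v (-2)) hsub hVm1 hVm2
          (vv_ne' v hp (by omega) (by omega) (by omega) (by omega) (by omega)) (PD_m2 v S hp)
    · -- T1 triangles
      obtain ⟨hq1, hq2, hj1, hj2⟩ := hSq q hq
      have hv3 := hsub hvmem
      simp only [Finset.mem_insert, Finset.mem_singleton] at hv3
      rcases hv3 with hv | hv | hv
      · -- role a : v = i
        have hvi : v = q.1 := by rwa [modRep_nat hq1 hq2] at hv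
        have hjA : q.2 ∈ AD p v S := by
          rw [AD, Finset.mem_filter]
          refine ⟨Finset.mem_Icc.2 ⟨hj1, hj2⟩, Or.inl ?_⟩
          rw [hvi, Prod.mk.eta]
          exact hq
        have base : modRep (3*p-1) (q.1:ℤ) = vvD p v 0 :=
          (hrole q.1 0 (by rwa [add_zero])).trans (hvarg _ _ (by norm_num))
        have e1 : modRep (3*p-1) ((q.1:ℤ)+1) = vvD p v 1 :=
          (hvvshift _ _ 1 base).trans (hvarg _ _ (by norm_num))
        have e2 : modRep (3*p-1) ((q.1:ℤ)+2+3*(q.2:ℤ)) = vvD p v (2+3*(q.2:ℤ)) := by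
          rw [hmrarg ((q.1:ℤ)+2+3*(q.2:ℤ)) ((q.1:ℤ)+(2+3*(q.2:ℤ))) (by ring)]
          exact (hvvshift _ _ (2+3*(q.2:ℤ)) base).trans (hvarg _ _ (by ring))
        rw [← hv, e1, e2] at hsub
        refine hfin (vvD p v 1) (vvD p v (2+3*(q.2:ℤ))) hsub hV1 (hVpend _ hjA)
          (vv_ne' v hp (by omega) (by omega) (by omega) (by omega) (by omega)) (PD_pend v S hjA)
      · -- role b : v = i+1
        have hjB : p-1-q.2 ∈ BD p v S := by
          rw [BD, Finset.mem_filter]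
          refine ⟨Finset.mem_Icc.2 ⟨by omega, by omega⟩, Or.inr ?_⟩
          have hpq : p-1-(p-1-q.2) = q.2 := by omega
          have hiq := hid q.1 1 hq1 hq2 hv
          rw [hpq, hmrarg ((v:ℤ)-1) ((v:ℤ)+(-1)) (by ring), ← hiq, Prod.mk.eta]
          exact hq
        have base : modRep (3*p-1) (q.1:ℤ) = vvD p v (-1) := hrole q.1 1 hv
        have e2 : modRep (3*p-1) ((q.1:ℤ)+2+3*(q.2:ℤ)) = vvD p v (-1-3*((p-1-q.2:ℕ):ℤ)) := by
          rw [hmrarg ((q.1:ℤ)+2+3*(q.2:ℤ)) ((q.1:ℤ)+(2+3*(q.2:ℤ))) (by ring)]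
          exact (hvvshift _ _ (2+3*(q.2:ℤ)) base).trans (hvvmrc _ _ 1 (by omega))
        rw [base, ← hv, e2, hswap12] at hsub
        refine hfin (vvD p v (-1)) (vvD p v (-1-3*((p-1-q.2:ℕ):ℤ))) hsub hVm1 (hVlev _ hjB)
          (vv_ne' v hp (by omega) (by omega) (by omega) (by omega) (by omega)) (PD_lev v S hp hjB)
      · -- role c : v = i+2+3j
        have hv' : v = modRep (3*p-1) ((q.1:ℤ)+(2+3*(q.2:ℤ))) :=
          hv.trans (hmrarg _ _ (by ring))
        have hjB : q.2 ∈ BD p v S := by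
          rw [BD, Finset.mem_filter]
          refine ⟨Finset.mem_Icc.2 ⟨hj1, hj2⟩, Or.inl ?_⟩
          have hiq := hid q.1 (2+3*(q.2:ℤ)) hq1 hq2 hv'
          rw [hmrarg ((v:ℤ)-2-3*(q.2:ℤ)) ((v:ℤ)+(-(2+3*(q.2:ℤ)))) (by ring), ← hiq, Prod.mk.eta]
          exact hq
        have base : modRep (3*p-1) (q.1:ℤ) = vvD p v (-2-3*(q.2:ℤ)) :=
          (hrole q.1 (2+3*(q.2:ℤ)) hv').trans (hvarg _ _ (by ring))
        have e1 : modRep (3*p-1) ((q.1:ℤ)+1) = vvD p v (-1-3*(q.2:ℤ)) :=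
          (hvvshift _ _ 1 base).trans (hvarg _ _ (by ring))
        rw [base, e1, ← hv, hswap23, hswap12, hswap23] at hsub
        refine hfin (vvD p v (-1-3*(q.2:ℤ))) (vvD p v (-2-3*(q.2:ℤ))) hsub (hVlev _ hjB)
          (hVdeep _ hjB)
          (vv_ne' v hp (by omega) (by omega) (by omega) (by omega) (by omega))
          (PD_deep v S hp hjB)
    · -- T2 triangles
      obtain ⟨hq1, hq2, hj1, hj2⟩ := hSq q hq
      have hv3 := hsub hvmem
      simp only [Finset.mem_insert, Finset.mem_singleton] at hv3
      rcases hv3 with hv | hv | hv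
      · -- role d : v = i+1+3j
        have hv' : v = modRep (3*p-1) ((q.1:ℤ)+(1+3*(q.2:ℤ))) :=
          hv.trans (hmrarg _ _ (by ring))
        have hjA : p-1-q.2 ∈ AD p v S := by
          rw [AD, Finset.mem_filter]
          refine ⟨Finset.mem_Icc.2 ⟨by omega, by omega⟩, Or.inr ?_⟩
          have hiq := hid q.1 (1+3*(q.2:ℤ)) hq1 hq2 hv'
          have hpq : p-1-(p-1-q.2) = q.2 := by omega
          rw [hpq, hmrarg ((v:ℤ)-1-3*((p:ℤ)-1-((p-1-q.2:ℕ):ℤ))) ((v:ℤ)+(-(1+3*(q.2:ℤ))))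
            (by omega), ← hiq, Prod.mk.eta]
          exact hq
        have base : modRep (3*p-1) (q.1:ℤ) = vvD p v (-1-3*(q.2:ℤ)) :=
          (hrole q.1 (1+3*(q.2:ℤ)) hv').trans (hvarg _ _ (by ring))
        have e2 : modRep (3*p-1) ((q.1:ℤ)+2+3*(q.2:ℤ)) = vvD p v 1 := by
          rw [hmrarg ((q.1:ℤ)+2+3*(q.2:ℤ)) ((q.1:ℤ)+(2+3*(q.2:ℤ))) (by ring)]
          exact (hvvshift _ _ (2+3*(q.2:ℤ)) base).trans (hvarg _ _ (by ring))
        have e3 : modRep (3*p-1) ((q.1:ℤ)+1) = vvD p v (2+3*((p-1-q.2:ℕ):ℤ)) :=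
          (hvvshift _ _ 1 base).trans (hvvmrc _ _ (-1) (by omega))
        rw [← hv, e2, e3] at hsub
        refine hfin (vvD p v 1) (vvD p v (2+3*((p-1-q.2:ℕ):ℤ))) hsub hV1 (hVpend _ hjA)
          (vv_ne' v hp (by omega) (by omega) (by omega) (by omega) (by omega)) (PD_pend v S hjA)
      · -- role c' : v = i+2+3j
        have hv' : v = modRep (3*p-1) ((q.1:ℤ)+(2+3*(q.2:ℤ))) :=
          hv.trans (hmrarg _ _ (by ring))
        have hjB : q.2 ∈ BD p v S := by
          rw [BD, Finset.mem_filter]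
          refine ⟨Finset.mem_Icc.2 ⟨hj1, hj2⟩, Or.inl ?_⟩
          have hiq := hid q.1 (2+3*(q.2:ℤ)) hq1 hq2 hv'
          rw [hmrarg ((v:ℤ)-2-3*(q.2:ℤ)) ((v:ℤ)+(-(2+3*(q.2:ℤ)))) (by ring), ← hiq, Prod.mk.eta]
          exact hq
        have base : modRep (3*p-1) (q.1:ℤ) = vvD p v (-2-3*(q.2:ℤ)) :=
          (hrole q.1 (2+3*(q.2:ℤ)) hv').trans (hvarg _ _ (by ring))
        have e1 : modRep (3*p-1) ((q.1:ℤ)+1+3*(q.2:ℤ)) = vvD p v (-1) := by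
          rw [hmrarg ((q.1:ℤ)+1+3*(q.2:ℤ)) ((q.1:ℤ)+(1+3*(q.2:ℤ))) (by ring)]
          exact (hvvshift _ _ (1+3*(q.2:ℤ)) base).trans (hvarg _ _ (by ring))
        have e3 : modRep (3*p-1) ((q.1:ℤ)+1) = vvD p v (-1-3*(q.2:ℤ)) :=
          (hvvshift _ _ 1 base).trans (hvarg _ _ (by ring))
        rw [e1, ← hv, e3, hswap12] at hsub
        refine hfin (vvD p v (-1)) (vvD p v (-1-3*(q.2:ℤ))) hsub hVm1 (hVlev _ hjB)
          (vv_ne' v hp (by omega) (by omega) (by omega) (by omega) (by omega))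
          (PD_lev v S hp hjB)
      · -- role b' : v = i+1
        have hjB : p-1-q.2 ∈ BD p v S := by
          rw [BD, Finset.mem_filter]
          refine ⟨Finset.mem_Icc.2 ⟨by omega, by omega⟩, Or.inr ?_⟩
          have hpq : p-1-(p-1-q.2) = q.2 := by omega
          have hiq := hid q.1 1 hq1 hq2 hv
          rw [hpq, hmrarg ((v:ℤ)-1) ((v:ℤ)+(-1)) (by ring), ← hiq, Prod.mk.eta]
          exact hq
        have base : modRep (3*p-1) (q.1:ℤ) = vvD p v (-1) := hrole q.1 1 hv
        have e1 : modRep (3*p-1) ((q.1:ℤ)+1+3*(q.2:ℤ)) = vvD p v (-2-3*((p-1-q.2:ℕ):ℤ)) := by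
          rw [hmrarg ((q.1:ℤ)+1+3*(q.2:ℤ)) ((q.1:ℤ)+(1+3*(q.2:ℤ))) (by ring)]
          exact (hvvshift _ _ (1+3*(q.2:ℤ)) base).trans (hvvmrc _ _ 1 (by omega))
        have e2 : modRep (3*p-1) ((q.1:ℤ)+2+3*(q.2:ℤ)) = vvD p v (-1-3*((p-1-q.2:ℕ):ℤ)) := by
          rw [hmrarg ((q.1:ℤ)+2+3*(q.2:ℤ)) ((q.1:ℤ)+(2+3*(q.2:ℤ))) (by ring)]
          exact (hvvshift _ _ (2+3*(q.2:ℤ)) base).trans (hvvmrc _ _ 1 (by omega))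
        rw [e1, e2, ← hv, hswap23, hswap12, hswap23] at hsub
        refine hfin (vvD p v (-1-3*((p-1-q.2:ℕ):ℤ))) (vvD p v (-2-3*((p-1-q.2:ℕ):ℤ))) hsub
          (hVlev _ hjB) (hVdeep _ hjB)
          (vv_ne' v hp (by omega) (by omega) (by omega) (by omega) (by omega))
          (PD_deep v S hp hjB)
  exact hforward

set_option maxHeartbeats 1000000 in
lemma link_edges {p : ℕ} (hp : 2 ≤ p) (S : Finset (ℕ × ℕ))
    (v : ℕ) (hv1 : 1 ≤ v) (hv2 : v ≤ 3*p-1) :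
    (({vvD p v (-2), vvD p v (-1)} : Finset ℕ) ∈ link (XD p S) {v}) ∧
    (({vvD p v 1, vvD p v (-1)} : Finset ℕ) ∈ link (XD p S) {v}) ∧
    (({vvD p v 2, vvD p v 1} : Finset ℕ) ∈ link (XD p S) {v}) ∧
    (∀ j ∈ AD p v S, ({vvD p v (2+3*(j:ℤ)), vvD p v 1} : Finset ℕ) ∈ link (XD p S) {v}) ∧
    (∀ j ∈ BD p v S, ({vvD p v (-1-3*(j:ℤ)), vvD p v (-1)} : Finset ℕ) ∈ link (XD p S) {v}) ∧
    (∀ j ∈ BD p v S, ({vvD p v (-2-3*(j:ℤ)), vvD p v (-1-3*(j:ℤ))} : Finset ℕ)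
      ∈ link (XD p S) {v}) := by
  classical
  have hN0 := N0 hp
  have hmrarg : ∀ a b : ℤ, a = b → modRep (3*p-1) a = modRep (3*p-1) b :=
    fun a b h => by rw [h]
  have hvarg : ∀ t t' : ℤ, t = t' → vvD p v t = vvD p v t' := fun t t' h => by rw [h]
  have hshift : ∀ (a b c : ℤ), modRep (3*p-1) a = modRep (3*p-1) b →
      modRep (3*p-1) (a+c) = modRep (3*p-1) (b+c) := by
    intro a b c h
    rw [modRep_eq_iff hN0] at h ⊢
    have heq : a + c - (b + c) = a - b := by ring
    rwa [heq]
  have hvvshift : ∀ (x t c : ℤ), modRep (3*p-1) x = vvD p v t →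
      modRep (3*p-1) (x + c) = vvD p v (t + c) := by
    intro x t c h
    rw [vvD] at h ⊢
    have h2 := hshift x ((v:ℤ)+t) c h
    rw [h2]
    exact hmrarg _ _ (by ring)
  have hv0 : vvD p v 0 = v := by
    rw [vvD, hmrarg ((v:ℤ)+0) (v:ℤ) (by ring)]
    exact modRep_nat hv1 hv2
  have hvvmrc : ∀ (t t' c : ℤ), t - t' = ((3*p-1:ℕ):ℤ)*c → vvD p v t = vvD p v t' :=
    fun t t' c h => (vv_eq_iff hp v).2 ⟨c, h⟩
  have hcomp : ∀ k : ℤ, modRep (3*p-1) ((v:ℤ)+k) = vvD p v k := fun k => rfl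
  have hvne : ∀ k : ℤ, -(2*(3*(p:ℤ)-1)) < k → k < 2*(3*(p:ℤ)-1) → k ≠ 0 →
      k ≠ 3*(p:ℤ)-1 → k ≠ -(3*(p:ℤ)-1) → vvD p v k ≠ v := by
    intro k h1 h2 h3 h4 h5 h
    exact vv_ne' v hp (k := k) (k' := 0) (by omega) (by omega) (by omega) (by omega) (by omega)
      (h.trans hv0.symm)
  have hXmem_s := XD_sub_sigma hp S
  have hXmem_T1 := XD_sub_T1 (p := p) S
  have hXmem_T2 := XD_sub_T2 (p := p) S
  have hmkL : ∀ (x y : ℕ) (T : Finset ℕ), x ≠ v → y ≠ v → (∀ G ⊆ T, G ∈ XD p S) →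
      ({x, y} : Finset ℕ) ∪ {v} ⊆ T → ({x, y} : Finset ℕ) ∈ link (XD p S) {v} := by
    intro x y T hx hy hT hsubT
    refine mem_link.2 ⟨hT _ ((Finset.subset_union_left).trans hsubT), ?_, hT _ hsubT⟩
    rw [Finset.disjoint_singleton_right]
    intro h
    rcases Finset.mem_insert.1 h with h1 | h2
    · exact hx h1.symm
    · rw [Finset.mem_singleton] at h2
      exact hy h2.symm
  have hE1 : ({vvD p v (-2), vvD p v (-1)} : Finset ℕ) ∈ link (XD p S) {v} := by
    refine hmkL _ _ _ (hvne (-2) (by omega) (by omega) (by omega) (by omega) (by omega))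
      (hvne (-1) (by omega) (by omega) (by omega) (by omega) (by omega))
      (fun G hG => hXmem_s ((v:ℤ)-2) G hG) ?_
    have d1 : modRep (3*p-1) ((v:ℤ)-2) = vvD p v (-2) := (hmrarg _ _ (by ring)).trans (hcomp _)
    have d2 : modRep (3*p-1) ((v:ℤ)-2+1) = vvD p v (-1) := (hmrarg _ _ (by ring)).trans (hcomp _)
    have d3 : modRep (3*p-1) ((v:ℤ)-2+2) = v :=
      ((hmrarg _ _ (by ring)).trans (hcomp 0)).trans hv0
    rw [d1, d2, d3]
    intro z hz
    simp only [Finset.mem_union, Finset.mem_insert, Finset.mem_singleton] at hz ⊢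
    tauto
  have hE2 : ({vvD p v 1, vvD p v (-1)} : Finset ℕ) ∈ link (XD p S) {v} := by
    refine hmkL _ _ _ (hvne 1 (by omega) (by omega) (by omega) (by omega) (by omega))
      (hvne (-1) (by omega) (by omega) (by omega) (by omega) (by omega))
      (fun G hG => hXmem_s ((v:ℤ)-1) G hG) ?_
    have d1 : modRep (3*p-1) ((v:ℤ)-1) = vvD p v (-1) := (hmrarg _ _ (by ring)).trans (hcomp _)
    have d2 : modRep (3*p-1) ((v:ℤ)-1+1) = v :=
      ((hmrarg _ _ (by ring)).trans (hcomp 0)).trans hv0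
    have d3 : modRep (3*p-1) ((v:ℤ)-1+2) = vvD p v 1 := (hmrarg _ _ (by ring)).trans (hcomp _)
    rw [d1, d2, d3]
    intro z hz
    simp only [Finset.mem_union, Finset.mem_insert, Finset.mem_singleton] at hz ⊢
    tauto
  have hE3 : ({vvD p v 2, vvD p v 1} : Finset ℕ) ∈ link (XD p S) {v} := by
    refine hmkL _ _ _ (hvne 2 (by omega) (by omega) (by omega) (by omega) (by omega))
      (hvne 1 (by omega) (by omega) (by omega) (by omega) (by omega))
      (fun G hG => hXmem_s ((v:ℤ)) G hG) ?_
    have d1 : modRep (3*p-1) ((v:ℤ)) = v :=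
      (hmrarg ((v:ℤ)) ((v:ℤ)+0) (by ring)).trans ((hcomp 0).trans hv0)
    have d2 : modRep (3*p-1) ((v:ℤ)+1) = vvD p v 1 := hcomp _
    have d3 : modRep (3*p-1) ((v:ℤ)+2) = vvD p v 2 := hcomp _
    rw [d1, d2, d3]
    intro z hz
    simp only [Finset.mem_union, Finset.mem_insert, Finset.mem_singleton] at hz ⊢
    tauto
  have hEpend : ∀ j ∈ AD p v S,
      ({vvD p v (2+3*(j:ℤ)), vvD p v 1} : Finset ℕ) ∈ link (XD p S) {v} := by
    intro j hj
    obtain ⟨hj1, hj2⟩ := AD_bounds v S hj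
    rcases (Finset.mem_filter.1 hj).2 with hc | hc
    · refine hmkL _ _ _ (hvne (2+3*(j:ℤ)) (by omega) (by omega) (by omega) (by omega) (by omega))
        (hvne 1 (by omega) (by omega) (by omega) (by omega) (by omega))
        (fun G hG => hXmem_T1 v j hc G hG) ?_
      have d1 : modRep (3*p-1) ((v:ℕ):ℤ) = v :=
        ((hmrarg _ _ (by ring)).trans (hcomp 0)).trans hv0
      have d2 : modRep (3*p-1) ((v:ℤ)+1) = vvD p v 1 := hcomp _
      have d3 : modRep (3*p-1) ((v:ℤ)+2+3*(j:ℤ)) = vvD p v (2+3*(j:ℤ)) :=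
        (hmrarg _ _ (by ring)).trans (hcomp _)
      rw [d1, d2, d3]
      intro z hz
      simp only [Finset.mem_union, Finset.mem_insert, Finset.mem_singleton] at hz ⊢
      tauto
    · set i₀ := modRep (3*p-1) ((v:ℤ) - 1 - 3*((p:ℤ)-1-(j:ℤ))) with hi₀
      refine hmkL _ _ _ (hvne (2+3*(j:ℤ)) (by omega) (by omega) (by omega) (by omega) (by omega))
        (hvne 1 (by omega) (by omega) (by omega) (by omega) (by omega))
        (fun G hG => hXmem_T2 i₀ (p-1-j) hc G hG) ?_
      have base : modRep (3*p-1) ((i₀:ℕ):ℤ) = vvD p v (-1-3*((p:ℤ)-1-(j:ℤ))) :=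
        (mr_congr hp (modRep_dvd_sub hN0 _)).trans ((hmrarg _ _ (by ring)).trans (hcomp _))
      have d1 : modRep (3*p-1) ((i₀:ℤ)+1+3*((p-1-j:ℕ):ℤ)) = v := by
        rw [hmrarg ((i₀:ℤ)+1+3*((p-1-j:ℕ):ℤ)) ((i₀:ℤ)+(1+3*((p-1-j:ℕ):ℤ))) (by ring)]
        exact (((hvvshift _ _ _ base).trans (hvarg _ _ (by omega)))).trans hv0
      have d2 : modRep (3*p-1) ((i₀:ℤ)+2+3*((p-1-j:ℕ):ℤ)) = vvD p v 1 := by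
        rw [hmrarg ((i₀:ℤ)+2+3*((p-1-j:ℕ):ℤ)) ((i₀:ℤ)+(2+3*((p-1-j:ℕ):ℤ))) (by ring)]
        exact ((hvvshift _ _ _ base).trans (hvarg _ _ (by omega)))
      have d3 : modRep (3*p-1) ((i₀:ℤ)+1) = vvD p v (2+3*(j:ℤ)) :=
        (hvvshift _ _ 1 base).trans (hvvmrc _ _ (-1) (by omega))
      rw [d1, d2, d3]
      intro z hz
      simp only [Finset.mem_union, Finset.mem_insert, Finset.mem_singleton] at hz ⊢
      tauto
  have hElev : ∀ j ∈ BD p v S,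
      ({vvD p v (-1-3*(j:ℤ)), vvD p v (-1)} : Finset ℕ) ∈ link (XD p S) {v} := by
    intro j hj
    obtain ⟨hj1, hj2⟩ := BD_bounds v S hj
    rcases (Finset.mem_filter.1 hj).2 with hc | hc
    · set i₀ := modRep (3*p-1) ((v:ℤ) - 2 - 3*(j:ℤ)) with hi₀
      refine hmkL _ _ _
        (hvne (-1-3*(j:ℤ)) (by omega) (by omega) (by omega) (by omega) (by omega))
        (hvne (-1) (by omega) (by omega) (by omega) (by omega) (by omega))
        (fun G hG => hXmem_T2 i₀ j hc G hG) ?_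
      have base : modRep (3*p-1) ((i₀:ℕ):ℤ) = vvD p v (-2-3*(j:ℤ)) :=
        (mr_congr hp (modRep_dvd_sub hN0 _)).trans ((hmrarg _ _ (by ring)).trans (hcomp _))
      have d1 : modRep (3*p-1) ((i₀:ℤ)+1+3*(j:ℤ)) = vvD p v (-1) := by
        rw [hmrarg ((i₀:ℤ)+1+3*(j:ℤ)) ((i₀:ℤ)+(1+3*(j:ℤ))) (by ring)]
        exact (hvvshift _ _ _ base).trans (hvarg _ _ (by ring))
      have d2 : modRep (3*p-1) ((i₀:ℤ)+2+3*(j:ℤ)) = v := by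
        rw [hmrarg ((i₀:ℤ)+2+3*(j:ℤ)) ((i₀:ℤ)+(2+3*(j:ℤ))) (by ring)]
        exact ((hvvshift _ _ _ base).trans (hvarg _ _ (by ring))).trans hv0
      have d3 : modRep (3*p-1) ((i₀:ℤ)+1) = vvD p v (-1-3*(j:ℤ)) :=
        (hvvshift _ _ 1 base).trans (hvarg _ _ (by ring))
      rw [d1, d2, d3]
      intro z hz
      simp only [Finset.mem_union, Finset.mem_insert, Finset.mem_singleton] at hz ⊢
      tauto
    · set i₁ := modRep (3*p-1) ((v:ℤ) - 1) with hi₁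
      refine hmkL _ _ _
        (hvne (-1-3*(j:ℤ)) (by omega) (by omega) (by omega) (by omega) (by omega))
        (hvne (-1) (by omega) (by omega) (by omega) (by omega) (by omega))
        (fun G hG => hXmem_T1 i₁ (p-1-j) hc G hG) ?_
      have base : modRep (3*p-1) ((i₁:ℕ):ℤ) = vvD p v (-1) :=
        (mr_congr hp (modRep_dvd_sub hN0 _)).trans ((hmrarg _ _ (by ring)).trans (hcomp _))
      have d2 : modRep (3*p-1) ((i₁:ℤ)+1) = v :=
        ((hvvshift _ _ 1 base).trans (hvarg _ _ (by ring))).trans hv0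
      have d3 : modRep (3*p-1) ((i₁:ℤ)+2+3*((p-1-j:ℕ):ℤ)) = vvD p v (-1-3*(j:ℤ)) := by
        rw [hmrarg ((i₁:ℤ)+2+3*((p-1-j:ℕ):ℤ)) ((i₁:ℤ)+(2+3*((p-1-j:ℕ):ℤ))) (by ring)]
        exact (hvvshift _ _ _ base).trans (hvvmrc _ _ 1 (by omega))
      rw [base, d2, d3]
      intro z hz
      simp only [Finset.mem_union, Finset.mem_insert, Finset.mem_singleton] at hz ⊢
      tauto
  have hEdeep : ∀ j ∈ BD p v S,
      ({vvD p v (-2-3*(j:ℤ)), vvD p v (-1-3*(j:ℤ))} : Finset ℕ) ∈ link (XD p S) {v} := by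
    intro j hj
    obtain ⟨hj1, hj2⟩ := BD_bounds v S hj
    rcases (Finset.mem_filter.1 hj).2 with hc | hc
    · set i₀ := modRep (3*p-1) ((v:ℤ) - 2 - 3*(j:ℤ)) with hi₀
      refine hmkL _ _ _
        (hvne (-2-3*(j:ℤ)) (by omega) (by omega) (by omega) (by omega) (by omega))
        (hvne (-1-3*(j:ℤ)) (by omega) (by omega) (by omega) (by omega) (by omega))
        (fun G hG => hXmem_T1 i₀ j hc G hG) ?_
      have base : modRep (3*p-1) ((i₀:ℕ):ℤ) = vvD p v (-2-3*(j:ℤ)) :=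
        (mr_congr hp (modRep_dvd_sub hN0 _)).trans ((hmrarg _ _ (by ring)).trans (hcomp _))
      have d2 : modRep (3*p-1) ((i₀:ℤ)+1) = vvD p v (-1-3*(j:ℤ)) :=
        (hvvshift _ _ 1 base).trans (hvarg _ _ (by ring))
      have d3 : modRep (3*p-1) ((i₀:ℤ)+2+3*(j:ℤ)) = v := by
        rw [hmrarg ((i₀:ℤ)+2+3*(j:ℤ)) ((i₀:ℤ)+(2+3*(j:ℤ))) (by ring)]
        exact (((hvvshift _ _ _ base).trans (hvarg _ _ (by ring)))).trans hv0
      rw [base, d2, d3]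
      intro z hz
      simp only [Finset.mem_union, Finset.mem_insert, Finset.mem_singleton] at hz ⊢
      tauto
    · set i₁ := modRep (3*p-1) ((v:ℤ) - 1) with hi₁
      refine hmkL _ _ _
        (hvne (-2-3*(j:ℤ)) (by omega) (by omega) (by omega) (by omega) (by omega))
        (hvne (-1-3*(j:ℤ)) (by omega) (by omega) (by omega) (by omega) (by omega))
        (fun G hG => hXmem_T2 i₁ (p-1-j) hc G hG) ?_
      have base : modRep (3*p-1) ((i₁:ℕ):ℤ) = vvD p v (-1) :=
        (mr_congr hp (modRep_dvd_sub hN0 _)).trans ((hmrarg _ _ (by ring)).trans (hcomp _))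
      have d1 : modRep (3*p-1) ((i₁:ℤ)+1+3*((p-1-j:ℕ):ℤ)) = vvD p v (-2-3*(j:ℤ)) := by
        rw [hmrarg ((i₁:ℤ)+1+3*((p-1-j:ℕ):ℤ)) ((i₁:ℤ)+(1+3*((p-1-j:ℕ):ℤ))) (by ring)]
        exact (hvvshift _ _ _ base).trans (hvvmrc _ _ 1 (by omega))
      have d2 : modRep (3*p-1) ((i₁:ℤ)+2+3*((p-1-j:ℕ):ℤ)) = vvD p v (-1-3*(j:ℤ)) := by
        rw [hmrarg ((i₁:ℤ)+2+3*((p-1-j:ℕ):ℤ)) ((i₁:ℤ)+(2+3*((p-1-j:ℕ):ℤ))) (by ring)]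
        exact (hvvshift _ _ _ base).trans (hvvmrc _ _ 1 (by omega))
      have d3 : modRep (3*p-1) ((i₁:ℤ)+1) = v :=
        ((hvvshift _ _ 1 base).trans (hvarg _ _ (by ring))).trans hv0
      rw [d1, d2, d3]
      intro z hz
      simp only [Finset.mem_union, Finset.mem_insert, Finset.mem_singleton] at hz ⊢
      tauto
  exact ⟨hE1, hE2, hE3, hEpend, hElev, hEdeep⟩

end LinkAnalysis
lemma PD_T3 {p : ℕ} (hp : 2 ≤ p) (S : Finset (ℕ × ℕ)) (v : ℕ) :
    ∀ u ∈ VD p v S, u ≠ vvD p v (-1) →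
      PD p v S u ∈ VD p v S ∧ PD p v S u ≠ u ∧
      (PD p v S u = vvD p v (-1) ∨ PD p v S (PD p v S u) = vvD p v (-1)) := by
  intro u hu hur
  rw [VD] at hu
  simp only [Finset.mem_union, Finset.mem_insert, Finset.mem_singleton, Finset.mem_image] at hu
  rcases hu with (((h | h | h | h) | ⟨j, hj, h⟩) | ⟨j, hj, h⟩) | ⟨j, hj, h⟩
  · subst h
    rw [PD_m2 v S hp]
    exact ⟨VD_m1 S v, vv_ne' v hp (k := -1) (k' := -2)
      (by omega) (by omega) (by omega) (by omega) (by omega), Or.inl rfl⟩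
  · exact absurd h hur
  · subst h
    rw [PD_vv1 v S hp]
    exact ⟨VD_m1 S v, vv_ne' v hp (k := -1) (k' := 1)
      (by omega) (by omega) (by omega) (by omega) (by omega), Or.inl rfl⟩
  · subst h
    rw [PD_vv2 v S]
    exact ⟨VD_1 S v, vv_ne' v hp (k := 1) (k' := 2)
      (by omega) (by omega) (by omega) (by omega) (by omega),
      Or.inr (PD_vv1 v S hp)⟩
  · obtain ⟨hj1, hj2⟩ := AD_bounds v S hj
    subst h
    rw [PD_pend v S hj]
    exact ⟨VD_1 S v, vv_ne' v hp (k := 1) (k' := 2+3*(j:ℤ))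
      (by omega) (by omega) (by omega) (by omega) (by omega),
      Or.inr (PD_vv1 v S hp)⟩
  · obtain ⟨hj1, hj2⟩ := BD_bounds v S hj
    subst h
    rw [PD_lev v S hp hj]
    exact ⟨VD_m1 S v, vv_ne' v hp (k := -1) (k' := -1-3*(j:ℤ))
      (by omega) (by omega) (by omega) (by omega) (by omega), Or.inl rfl⟩
  · obtain ⟨hj1, hj2⟩ := BD_bounds v S hj
    subst h
    rw [PD_deep v S hp hj]
    exact ⟨VD_lev S v j hj, vv_ne' v hp (k := -1-3*(j:ℤ)) (k' := -2-3*(j:ℤ))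
      (by omega) (by omega) (by omega) (by omega) (by omega),
      Or.inr (PD_lev v S hp hj)⟩

lemma link_char {p : ℕ} (hp : 2 ≤ p) (S : Finset (ℕ × ℕ))
    (hS : S ⊆ (Finset.Icc 1 (3 * p - 1)) ×ˢ (Finset.Icc 1 (p - 2)))
    (v : ℕ) (hv1 : 1 ≤ v) (hv2 : v ≤ 3*p-1) :
    ∀ F : Finset ℕ, F ∈ link (XD p S) {v} ↔
      F = ∅ ∨ ∃ u ∈ VD p v S, F = {u} ∨ (u ≠ vvD p v (-1) ∧ F = {u, PD p v S u}) := by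
  have hlinkdown : ∀ {G G' : Finset ℕ}, G' ⊆ G → G ∈ link (XD p S) {v} →
      G' ∈ link (XD p S) {v} := by
    intro G G' hsubGG hG
    obtain ⟨h1, h2, h3⟩ := mem_link.1 hG
    exact mem_link.2 ⟨XD_down S hsubGG h1, Finset.disjoint_of_subset_left hsubGG h2,
      XD_down S (Finset.union_subset_union_left hsubGG) h3⟩
  obtain ⟨hE1, hE2, hE3, hEpend, hElev, hEdeep⟩ := link_edges hp S v hv1 hv2
  intro F
  constructor
  · exact fun h => link_forward hp S hS v hv1 hv2 F h
  · rintro (rfl | ⟨u, hu, rfl | ⟨hur, rfl⟩⟩)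
    · exact hlinkdown (Finset.empty_subset _) hE1
    · rw [VD] at hu
      simp only [Finset.mem_union, Finset.mem_insert, Finset.mem_singleton,
        Finset.mem_image] at hu
      rcases hu with (((h | h | h | h) | ⟨j, hj, h⟩) | ⟨j, hj, h⟩) | ⟨j, hj, h⟩
      · subst h; exact hlinkdown (by simp) hE1
      · subst h; exact hlinkdown (by simp) hE1
      · subst h; exact hlinkdown (by simp) hE2
      · subst h; exact hlinkdown (by simp) hE3
      · subst h; exact hlinkdown (by simp) (hEpend j hj)
      · subst h; exact hlinkdown (by simp) (hElev j hj)
      · subst h; exact hlinkdown (by simp) (hEdeep j hj)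
    · rw [VD] at hu
      simp only [Finset.mem_union, Finset.mem_insert, Finset.mem_singleton,
        Finset.mem_image] at hu
      rcases hu with (((h | h | h | h) | ⟨j, hj, h⟩) | ⟨j, hj, h⟩) | ⟨j, hj, h⟩
      · subst h; rw [PD_m2 v S hp]; exact hE1
      · exact absurd h hur
      · subst h; rw [PD_vv1 v S hp]; exact hE2
      · subst h; rw [PD_vv2 v S]; exact hE3
      · subst h; rw [PD_pend v S hj]; exact hEpend j hj
      · subst h; rw [PD_lev v S hp hj]; exact hElev j hj
      · subst h; rw [PD_deep v S hp hj]; exact hEdeep j hj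

theorem link_tree_struct (K : Type) [Field K] {p : ℕ} (hp : 2 ≤ p)
    (S : Finset (ℕ × ℕ)) (hS : S ⊆ (Finset.Icc 1 (3 * p - 1)) ×ˢ (Finset.Icc 1 (p - 2)))
    (v : ℕ) (hv1 : 1 ≤ v) (hv2 : v ≤ 3*p-1) :
    (∀ i : ℤ, betti K (link (XD p S) {v}) i = 0) ∧
    IsCohenMacaulay K (link (XD p S) {v}) := by
  have hedge : ∃ u ∈ VD p v S, u ≠ vvD p v (-1) :=
    ⟨vvD p v 1, VD_1 S v, vv_ne' v hp (k := 1) (k' := -1)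
      (by omega) (by omega) (by omega) (by omega) (by omega)⟩
  exact tree_betti_CM (link (XD p S) {v}) (vvD p v (-1)) (VD p v S) (PD p v S)
    (VD_m1 S v) (PD_T3 hp S v) hedge (link_char hp S hS v hv1 hv2)

lemma mr_ne {p : ℕ} (hp : 2 ≤ p) {a b : ℤ}
    (hb1 : -(2*(3*(p:ℤ)-1)) < a - b) (hb2 : a - b < 2*(3*(p:ℤ)-1))
    (h0 : a - b ≠ 0) (h1 : a - b ≠ 3*(p:ℤ)-1) (h2 : a - b ≠ -(3*(p:ℤ)-1)) :
    modRep (3*p-1) a ≠ modRep (3*p-1) b := by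
  rw [Ne, modRep_eq_iff (N0 hp), Ncast hp]
  exact key_ndvd hp (abs_lt.2 ⟨hb1, hb2⟩) h0 h1 h2

lemma XD_vertices {p : ℕ} (hp : 2 ≤ p) (S : Finset (ℕ×ℕ)) :
    ∀ F ∈ XD p S, ∀ x ∈ F, 1 ≤ x ∧ x ≤ 3*p-1 := by
  intro F hF x hx
  have hmem : ∀ (T : Finset ℕ) (a b c : ℤ), T = {modRep (3*p-1) a, modRep (3*p-1) b,
      modRep (3*p-1) c} → F ⊆ T → 1 ≤ x ∧ x ≤ 3*p-1 := by
    intro T a b c hT hsub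
    have := hsub hx
    rw [hT] at this
    simp only [Finset.mem_insert, Finset.mem_singleton] at this
    rcases this with rfl | rfl | rfl <;> exact modRep_bounds (N0 hp) _
  rcases (mem_XD S F).1 hF with ⟨i, hi, hs⟩ | ⟨q, hqS, hs | hs⟩
  · exact hmem _ _ _ _ rfl hs
  · exact hmem _ _ _ _ rfl hs
  · exact hmem _ _ _ _ rfl hs

lemma XD_pure {p : ℕ} (hp : 2 ≤ p)
    (S : Finset (ℕ × ℕ)) (hS : S ⊆ (Finset.Icc 1 (3 * p - 1)) ×ˢ (Finset.Icc 1 (p - 2))) :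
    IsPure (XD p S) := by
  have hN0 := N0 hp
  -- every generator triangle has 3 elements and lies in XD
  have hgen : ∀ F ∈ XD p S, ∃ T ∈ XD p S, F ⊆ T ∧ T.card = 3 := by
    intro F hF
    rcases (mem_XD S F).1 hF with ⟨i, hi, hs⟩ | ⟨q, hqS, hs | hs⟩
    · refine ⟨_, (mem_XD S _).2 (Or.inl ⟨i, hi, Finset.Subset.refl _⟩), hs, ?_⟩
      exact hcard3
        (mr_ne hp (by omega) (by omega) (by omega) (by omega) (by omega))
        (mr_ne hp (by omega) (by omega) (by omega) (by omega) (by omega))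
        (mr_ne hp (by omega) (by omega) (by omega) (by omega) (by omega))
    · have hq := hS hqS
      rw [Finset.mem_product, Finset.mem_Icc, Finset.mem_Icc] at hq
      obtain ⟨⟨hq1, hq2⟩, hj1, hj2⟩ := hq
      refine ⟨_, (mem_XD S _).2 (Or.inr ⟨q, hqS, Or.inl (Finset.Subset.refl _)⟩), hs, ?_⟩
      exact hcard3
        (mr_ne hp (by omega) (by omega) (by omega) (by omega) (by omega))
        (mr_ne hp (by omega) (by omega) (by omega) (by omega) (by omega))
        (mr_ne hp (by omega) (by omega) (by omega) (by omega) (by omega))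
    · have hq := hS hqS
      rw [Finset.mem_product, Finset.mem_Icc, Finset.mem_Icc] at hq
      obtain ⟨⟨hq1, hq2⟩, hj1, hj2⟩ := hq
      refine ⟨_, (mem_XD S _).2 (Or.inr ⟨q, hqS, Or.inr (Finset.Subset.refl _)⟩), hs, ?_⟩
      exact hcard3
        (mr_ne hp (by omega) (by omega) (by omega) (by omega) (by omega))
        (mr_ne hp (by omega) (by omega) (by omega) (by omega) (by omega))
        (mr_ne hp (by omega) (by omega) (by omega) (by omega) (by omega))
  have hsup : (XD p S).sup Finset.card = 3 := by
    apply le_antisymm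
    · apply Finset.sup_le
      intro F hF
      obtain ⟨T, hT, hsub, hc⟩ := hgen F hF
      calc F.card ≤ T.card := Finset.card_le_card hsub
        _ = 3 := hc
    · have h1 : (∅ : Finset ℕ) ∈ XD p S := by
        refine (mem_XD S ∅).2 (Or.inl ⟨1, ?_, Finset.empty_subset _⟩)
        rw [Finset.mem_Icc]
        omega
      obtain ⟨T, hT, _, hc⟩ := hgen ∅ h1
      calc (3:ℕ) = T.card := hc.symm
        _ ≤ _ := Finset.le_sup hT
  intro F hF hmax
  obtain ⟨T, hT, hsub, hc⟩ := hgen F hF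
  rw [hmax T hT hsub, hc, hsup]
/-- **Lemma 3.2(ii).** For `n = 3p-1` and any subcollection `M ⊆ L` of the `Δ(i,j)`,
`Σ ∪ ⋃_{Δ(i,j) ∈ M} Δ(i,j)` is Buchsbaum and link-acyclic. -/
theorem stmt13 (K : Type) [Field K] (p : ℕ) (hp : 2 ≤ p)
    (S : Finset (ℕ × ℕ))
    (hS : S ⊆ (Finset.Icc 1 (3 * p - 1)) ×ˢ (Finset.Icc 1 (p - 2))) :
    IsBuchsbaum K (SigmaA p ∪ S.biUnion fun q => DeltaA p q.1 q.2) ∧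
      IsLinkAcyclic K (SigmaA p ∪ S.biUnion fun q => DeltaA p q.1 q.2) := by
  show IsBuchsbaum K (XD p S) ∧ IsLinkAcyclic K (XD p S)
  have hvert : ∀ v : ℕ, ({v} : Finset ℕ) ∈ XD p S → 1 ≤ v ∧ v ≤ 3*p-1 :=
    fun v hv => XD_vertices hp S {v} hv v (Finset.mem_singleton_self v)
  refine ⟨⟨XD_pure hp S hS, ?_⟩, ?_⟩
  · intro v hv
    obtain ⟨hv1, hv2⟩ := hvert v hv
    exact (link_tree_struct K hp S hS v hv1 hv2).2
  · intro v hv i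
    obtain ⟨hv1, hv2⟩ := hvert v hv
    exact (link_tree_struct K hp S hS v hv1 hv2).1 i
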